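/- arXiv:1202.3064 — 4 statements merged into one kernel-verified Lean document; each statement's English description precedes it below -/
import Mathlib

section
/- Let n ≥ 2 and let V be an invertible n×n real matrix such that the first row of V is a scalar multiple of the all-ones row vector (1,1,...,1) and, for every i ≥ 2, the entries of the i-th row of V sum to 0. Then: (a) for every r ∈ ℝ and every (n−1)×(n−1) real matrix X, the matrix A = V⁻¹ · B · V, where B is the block-diagonal matrix with the scalar r in the (1,1) position and X as the lower-right (n−1)×(n−1) block (and zeros elsewhere in the first row and first column), has every row sum and every column sum equal to r; (b) conversely, for every n×n real matrix A all of whose row sums and column sums equal r, there exists an (n−1)×(n−1) real matrix X such that V · A · V⁻¹ equals the block-diagonal matrix with r in the (1,1) position and X as the lower-right block. -/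
open Matrix

/-- The `(m+1) × (m+1)` block matrix with the scalar `r` in the `(1,1)` position,
`X` as the lower-right `m × m` block, and zeros elsewhere in the first row and column. -/
noncomputable def blockOneMat {m : ℕ} (r : ℝ) (X : Matrix (Fin m) (Fin m) ℝ) :
    Matrix (Fin (m + 1)) (Fin (m + 1)) ℝ :=
  Matrix.of fun i j =>
    if hi : i = 0 then (if j = 0 then r else 0)
    else if hj : j = 0 then 0 else X (i.pred hi) (j.pred hj)

section aux
variable {m : ℕ}

lemma block_mulVec_single (r : ℝ) (X : Matrix (Fin m) (Fin m) ℝ) :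
    blockOneMat r X *ᵥ Pi.single (0 : Fin (m+1)) (1:ℝ)
      = r • (Pi.single 0 1 : Fin (m+1) → ℝ) := by
  funext i
  simp only [mulVec, dotProduct, Pi.smul_apply, smul_eq_mul]
  rw [Finset.sum_eq_single 0]
  · by_cases hi : i = 0 <;> simp [blockOneMat, hi, Pi.single_apply]
  · intro b _ hb; simp [Pi.single_apply, hb]
  · simp

lemma single_vecMul_block (r : ℝ) (X : Matrix (Fin m) (Fin m) ℝ) :
    Pi.single (0 : Fin (m+1)) (1:ℝ) ᵥ* blockOneMat r X
      = r • (Pi.single 0 1 : Fin (m+1) → ℝ) := by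
  funext j
  simp only [vecMul, dotProduct, Pi.smul_apply, smul_eq_mul]
  rw [Finset.sum_eq_single 0]
  · by_cases hj : j = 0 <;> simp [blockOneMat, hj, Pi.single_apply]
  · intro b _ hb; simp [Pi.single_apply, hb]
  · simp

end aux

/-- If `V` is an invertible `n × n` real matrix (with `n = m + 1 ≥ 2`) whose first row is a
scalar multiple of the all-ones row and each other row sums to `0`, then (a) for every `r` and
every `(n-1) × (n-1)` matrix `X`, the matrix `V⁻¹ * blockOneMat r X * V` has all row and
column sums equal to `r`; and (b) conversely every matrix `A` with all row and column sums
equal to `r` satisfies `V * A * V⁻¹ = blockOneMat r X` for some `X`. -/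
theorem pattern_S_conjugation (m : ℕ) (hm : 1 ≤ m)
    (V : Matrix (Fin (m + 1)) (Fin (m + 1)) ℝ) (hV : IsUnit V.det)
    (hrow0 : ∃ c : ℝ, ∀ j, V 0 j = c)
    (hrows : ∀ i : Fin (m + 1), i ≠ 0 → ∑ j, V i j = 0) :
    (∀ (r : ℝ) (X : Matrix (Fin m) (Fin m) ℝ),
        (∀ i, ∑ j, (V⁻¹ * blockOneMat r X * V) i j = r) ∧
        (∀ j, ∑ i, (V⁻¹ * blockOneMat r X * V) i j = r)) ∧
    (∀ (r : ℝ) (A : Matrix (Fin (m + 1)) (Fin (m + 1)) ℝ),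
        (∀ i, ∑ j, A i j = r) → (∀ j, ∑ i, A i j = r) →
        ∃ X : Matrix (Fin m) (Fin m) ℝ, V * A * V⁻¹ = blockOneMat r X) := by
  obtain ⟨c, hc⟩ := hrow0
  set e0 : Fin (m+1) → ℝ := Pi.single 0 1 with he0
  set one : Fin (m+1) → ℝ := fun _ => 1 with hone
  have hcne : c ≠ 0 := by
    intro h
    apply hV.ne_zero
    apply Matrix.det_eq_zero_of_row_eq_zero 0
    intro j; rw [hc j, h]
  set k : ℝ := c * (m+1) with hk
  have hkne : k ≠ 0 := by
    apply mul_ne_zero hcne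
    positivity
  have hVV : V * V⁻¹ = 1 := Matrix.mul_nonsing_inv V hV
  have hVV' : V⁻¹ * V = 1 := Matrix.nonsing_inv_mul V hV
  have hV1 : V *ᵥ one = k • e0 := by
    funext i
    simp only [mulVec, dotProduct, hone, mul_one, Pi.smul_apply, smul_eq_mul]
    by_cases hi : i = 0
    · subst hi
      simp only [he0, Pi.single_eq_same, mul_one, hk]
      rw [Finset.sum_congr rfl (fun j _ => hc j)]
      simp [mul_comm]
    · rw [hrows i hi, he0, Pi.single_eq_of_ne hi, mul_zero]
  have hE : e0 ᵥ* V = c • one := by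
    funext j
    simp only [vecMul, dotProduct, Pi.smul_apply, smul_eq_mul, hone, mul_one]
    rw [Finset.sum_eq_single 0]
    · simp [he0, hc j]
    · intro b _ hb; simp [he0, Pi.single_apply, hb]
    · simp
  have h1Vi : one ᵥ* V⁻¹ = c⁻¹ • e0 := by
    have h : (c⁻¹ • e0) ᵥ* V = one := by
      rw [Matrix.smul_vecMul, hE, smul_smul, inv_mul_cancel₀ hcne, one_smul]
    calc one ᵥ* V⁻¹ = ((c⁻¹ • e0) ᵥ* V) ᵥ* V⁻¹ := by rw [h]
      _ = (c⁻¹ • e0) ᵥ* (V * V⁻¹) := by rw [Matrix.vecMul_vecMul]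
      _ = c⁻¹ • e0 := by rw [hVV, Matrix.vecMul_one]
  have hVie : V⁻¹ *ᵥ e0 = k⁻¹ • one := by
    have h1 : k • (V⁻¹ *ᵥ e0) = one := by
      rw [← Matrix.mulVec_smul, ← hV1, Matrix.mulVec_mulVec, hVV', Matrix.one_mulVec]
    rw [← h1, smul_smul, inv_mul_cancel₀ hkne, one_smul]
  constructor
  · intro r X
    constructor
    · intro i
      have key : (V⁻¹ * blockOneMat r X * V) *ᵥ one = r • one := by
        calc (V⁻¹ * blockOneMat r X * V) *ᵥ one
            = V⁻¹ *ᵥ (blockOneMat r X *ᵥ (V *ᵥ one)) := by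
              rw [← Matrix.mulVec_mulVec, ← Matrix.mulVec_mulVec]
          _ = V⁻¹ *ᵥ (k • (r • e0)) := by
              rw [hV1, Matrix.mulVec_smul, block_mulVec_single]
          _ = (k * r) • (V⁻¹ *ᵥ e0) := by rw [smul_smul, Matrix.mulVec_smul]
          _ = (k * r * k⁻¹) • one := by rw [hVie, smul_smul]
          _ = r • one := by congr 1; field_simp; try ring
      have := congrFun key i
      simpa [mulVec, dotProduct, hone] using this
    · intro j
      have key : one ᵥ* (V⁻¹ * blockOneMat r X * V) = r • one := by
        calc one ᵥ* (V⁻¹ * blockOneMat r X * V)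
            = ((one ᵥ* V⁻¹) ᵥ* blockOneMat r X) ᵥ* V := by
              rw [Matrix.vecMul_vecMul, Matrix.vecMul_vecMul, mul_assoc]
          _ = (c⁻¹ • (r • e0)) ᵥ* V := by
              rw [h1Vi, Matrix.smul_vecMul, single_vecMul_block]
          _ = (c⁻¹ * r) • (e0 ᵥ* V) := by rw [smul_smul, Matrix.smul_vecMul]
          _ = (c⁻¹ * r * c) • one := by rw [hE, smul_smul]
          _ = r • one := by congr 1; field_simp; try ring
      have := congrFun key j
      simpa [vecMul, dotProduct, hone] using this
  · intro r A hrow hcol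
    have hA1 : A *ᵥ one = r • one := by
      funext i
      simpa [mulVec, dotProduct, hone] using hrow i
    have hA2 : one ᵥ* A = r • one := by
      funext j
      simpa [vecMul, dotProduct, hone] using hcol j
    set M := V * A * V⁻¹ with hM
    have hMe : M *ᵥ e0 = r • e0 := by
      calc M *ᵥ e0 = V *ᵥ (A *ᵥ (V⁻¹ *ᵥ e0)) := by
            rw [hM, ← Matrix.mulVec_mulVec, ← Matrix.mulVec_mulVec]
        _ = V *ᵥ (k⁻¹ • (r • one)) := by
            rw [hVie, Matrix.mulVec_smul, hA1]
        _ = (k⁻¹ * r) • (V *ᵥ one) := by rw [smul_smul, Matrix.mulVec_smul]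
        _ = (k⁻¹ * r * k) • e0 := by rw [hV1, smul_smul]
        _ = r • e0 := by congr 1; field_simp; try ring
    have heM : e0 ᵥ* M = r • e0 := by
      calc e0 ᵥ* M = ((e0 ᵥ* V) ᵥ* A) ᵥ* V⁻¹ := by
            rw [hM, Matrix.vecMul_vecMul, Matrix.vecMul_vecMul, mul_assoc]
        _ = (c • (r • one)) ᵥ* V⁻¹ := by
            rw [hE, Matrix.smul_vecMul, hA2]
        _ = (c * r) • (one ᵥ* V⁻¹) := by rw [smul_smul, Matrix.smul_vecMul]
        _ = (c * r * c⁻¹) • e0 := by rw [h1Vi, smul_smul]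
        _ = r • e0 := by congr 1; field_simp; try ring
    refine ⟨Matrix.of fun i j => M i.succ j.succ, ?_⟩
    funext i j
    have hcol0 : ∀ i', M i' 0 = r * e0 i' := by
      intro i'
      have h := congrFun hMe i'
      simp only [mulVec, dotProduct, Pi.smul_apply, smul_eq_mul] at h
      rw [Finset.sum_eq_single 0] at h
      · simpa [he0] using h
      · intro b _ hb; simp [he0, Pi.single_apply, hb]
      · simp
    have hrow0' : ∀ j', M 0 j' = r * e0 j' := by
      intro j'
      have h := congrFun heM j'
      simp only [vecMul, dotProduct, Pi.smul_apply, smul_eq_mul] at h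
      rw [Finset.sum_eq_single 0] at h
      · simpa [he0] using h
      · intro b _ hb; simp [he0, Pi.single_apply, hb]
      · simp
    show M i j = blockOneMat r (Matrix.of fun i j => M i.succ j.succ) i j
    by_cases hi : i = 0
    · subst hi
      by_cases hj : j = 0
      · subst hj; simp [blockOneMat, hrow0' 0, he0]
      · simp [blockOneMat, hj, hrow0' j, he0, Pi.single_apply, hj]
    · by_cases hj : j = 0
      · subst hj
        simp [blockOneMat, hi, hcol0 i, he0, Pi.single_apply, hi]
      · simp [blockOneMat, hi, hj, Fin.succ_pred]
end

section
/- Let λ and μ be real numbers. There exists a symmetric 3×3 doubly stochastic matrix whose eigenvalues, counted with algebraic multiplicity, are 1, λ, μ if and only if −1 ≤ λ ≤ 1, −1 ≤ μ ≤ 1, λ + 3μ + 2 ≥ 0, and 3λ + μ + 2 ≥ 0. -/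
open Matrix Polynomial

/-- A real square matrix is doubly stochastic if its entries are nonnegative and all of its
row sums and column sums are equal to `1`. -/
def DoublyStochastic {n : ℕ} (D : Matrix (Fin n) (Fin n) ℝ) : Prop :=
  (∀ i j, 0 ≤ D i j) ∧ (∀ i, ∑ j, D i j = 1) ∧ (∀ j, ∑ i, D i j = 1)

lemma charpoly_sym3 (d1 d2 d3 d4 l m : ℝ)
    (ht : 2*d1 + d4 = 1 + l + m)
    (he : d1^2 - d2^2 + 2*(d1*d4 - d3^2) = l + m + l*m)
    (hd : d1*(d1*d4 - d3^2) - d2*(d2*d4 - d3^2) + d3*(d2*d3 - d1*d3) = l*m) :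
    (!![d1,d2,d3; d2,d1,d3; d3,d3,d4] : Matrix (Fin 3) (Fin 3) ℝ).charpoly
      = (X - C 1) * (X - C l) * (X - C m) := by
  have h1 : (2:ℝ[X]) * C d1 + C d4 = 1 + C l + C m := by
    have := congrArg (Polynomial.C (R := ℝ)) ht
    simpa [map_ofNat] using this
  have h2 : (C d1)^2 - (C d2)^2 + 2*(C d1 * C d4 - (C d3)^2) = C l + C m + C l * C m := by
    have := congrArg (Polynomial.C (R := ℝ)) he
    simpa [map_ofNat] using this
  have h3 : C d1*(C d1 * C d4 - (C d3)^2) - C d2*(C d2 * C d4 - (C d3)^2)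
      + C d3*(C d2 * C d3 - C d1 * C d3) = C l * C m := by
    have := congrArg (Polynomial.C (R := ℝ)) hd
    simpa [map_ofNat] using this
  rw [Matrix.charpoly, Matrix.det_fin_three]
  rw [charmatrix_apply_ne _ 0 1 (by decide), charmatrix_apply_ne _ 0 2 (by decide),
    charmatrix_apply_ne _ 1 0 (by decide), charmatrix_apply_ne _ 1 2 (by decide),
    charmatrix_apply_ne _ 2 0 (by decide), charmatrix_apply_ne _ 2 1 (by decide),
    charmatrix_apply_eq, charmatrix_apply_eq, charmatrix_apply_eq]
  norm_num [Matrix.cons_val_zero, Matrix.cons_val_one, Matrix.head_cons, Matrix.cons_val_two,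
    Matrix.tail_cons]
  linear_combination (-(X^2)) * h1 + X * h2 - h3

lemma expand3 (a b : ℝ) : ((X - C 1) * (X - C a) * (X - C b) : ℝ[X]) =
    X^3 - C (1+a+b) * X^2 + C (a+b+a*b) * X - C (a*b) := by
  simp only [C_add, C_mul, C_1]
  ring

lemma coeff2' (a b : ℝ) : ((X - C 1) * (X - C a) * (X - C b) : ℝ[X]).coeff 2 = -(1+a+b) := by
  rw [expand3]
  simp only [coeff_add, coeff_sub, coeff_C_mul, coeff_X_pow, coeff_C, coeff_X]
  norm_num

lemma coeff0' (a b : ℝ) : ((X - C 1) * (X - C a) * (X - C b) : ℝ[X]).coeff 0 = -(a*b) := by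
  rw [expand3]
  simp only [coeff_add, coeff_sub, coeff_C_mul, coeff_X_pow, coeff_C, coeff_X]
  norm_num

/-- The key inequalities, derived from the entry constraints. -/
lemma sdiep_ineqs (p q r lam mu : ℝ) (hp : 0 ≤ p) (hq : 0 ≤ q) (hr : 0 ≤ r)
    (ha : 0 ≤ 1 - p - q) (hb : 0 ≤ 1 - p - r) (hc : 0 ≤ 1 - q - r)
    (hS : lam + mu = 2 - 2*(p + q + r))
    (hP : lam * mu = (1-p-q)*((1-p-r)*(1-q-r)) - p*(p*(1-q-r)) + p*(r*q)
        + q*(p*r) - q*((1-p-r)*q) - r*((1-p-q)*r)) :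
    -1 ≤ lam ∧ lam ≤ 1 ∧ -1 ≤ mu ∧ mu ≤ 1 ∧
      0 ≤ lam + 3 * mu + 2 ∧ 0 ≤ 3 * lam + mu + 2 := by
  have hS2 : lam + mu ≤ 2 := by linarith
  have hSm1 : -1 ≤ lam + mu := by linarith
  have hC : (1 - lam) * (1 - mu) = 3*(p*q + p*r + q*r) := by
    linear_combination (-1) * hS + hP
  have hD : 3*((1 + lam) * (1 + mu)) =
      4*((1-p-q)*(1-p-r) + (1-p-q)*(1-q-r) + (1-p-r)*(1-q-r))
      + 2*(p*(1-p-q) + p*(1-p-r) + q*(1-p-q) + q*(1-q-r) + r*(1-p-r) + r*(1-q-r))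
      + (p*q + p*r + q*r) := by
    linear_combination 3 * hS + 3 * hP
  have hF : (lam + 3*mu + 2) * (3*lam + mu + 2) =
      12*((1-p-q)*(1-p-r) + (1-p-q)*(1-q-r) + (1-p-r)*(1-q-r)) := by
    linear_combination (3*(lam + mu + 2 - 2*(p+q+r)) + 8) * hS + 4 * hP
  have hC0 : 0 ≤ (1 - lam) * (1 - mu) := by
    rw [hC]
    have := mul_nonneg hp hq
    have := mul_nonneg hp hr
    have := mul_nonneg hq hr
    linarith
  have hD0 : 0 ≤ (1 + lam) * (1 + mu) := by
    have h1 := mul_nonneg ha hb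
    have h2 := mul_nonneg ha hc
    have h3 := mul_nonneg hb hc
    have h4 := mul_nonneg hp ha
    have h5 := mul_nonneg hp hb
    have h6 := mul_nonneg hq ha
    have h7 := mul_nonneg hq hc
    have h8 := mul_nonneg hr hb
    have h9 := mul_nonneg hr hc
    have h10 := mul_nonneg hp hq
    have h11 := mul_nonneg hp hr
    have h12 := mul_nonneg hq hr
    nlinarith [hD]
  have hF0 : 0 ≤ (lam + 3*mu + 2) * (3*lam + mu + 2) := by
    have h1 := mul_nonneg ha hb
    have h2 := mul_nonneg ha hc
    have h3 := mul_nonneg hb hc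
    nlinarith [hF]
  clear hC hD hF hP hS hp hq hr ha hb hc
  refine ⟨?_, ?_, ?_, ?_, ?_, ?_⟩
  · nlinarith [hD0, hSm1]
  · nlinarith [hC0, hS2]
  · nlinarith [hD0, hSm1]
  · nlinarith [hC0, hS2]
  · nlinarith [hF0, hSm1]
  · nlinarith [hF0, hSm1]

/-- The construction for `mu ≤ lam`. -/
lemma sdiep_construct (lam mu : ℝ) (hml : mu ≤ lam) (hl1 : lam ≤ 1) (hm1 : mu ≤ 1)
    (h13 : 0 ≤ lam + 3 * mu + 2) (h31 : 0 ≤ 3 * lam + mu + 2) :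
    ∃ D : Matrix (Fin 3) (Fin 3) ℝ, D.IsSymm ∧ DoublyStochastic D ∧
        D.charpoly = (X - C 1) * (X - C lam) * (X - C mu) := by
  refine ⟨!![(2+lam+3*mu)/6, (2+lam-3*mu)/6, (1-lam)/3;
            (2+lam-3*mu)/6, (2+lam+3*mu)/6, (1-lam)/3;
            (1-lam)/3, (1-lam)/3, (1+2*lam)/3], ?_, ⟨?_, ?_, ?_⟩, ?_⟩
  · ext i j
    fin_cases i <;> fin_cases j <;> simp
  · intro i j
    fin_cases i <;> fin_cases j <;> simp <;> linarith
  · intro i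
    fin_cases i <;> simp [Fin.sum_univ_three] <;> ring
  · intro j
    fin_cases j <;> simp [Fin.sum_univ_three] <;> ring
  · exact charpoly_sym3 _ _ _ _ lam mu (by ring) (by ring) (by ring)

/-- There exists a symmetric `3 × 3` doubly stochastic matrix with eigenvalues
(with algebraic multiplicity) `1, λ, μ` if and only if `-1 ≤ λ ≤ 1`, `-1 ≤ μ ≤ 1`,
`λ + 3μ + 2 ≥ 0` and `3λ + μ + 2 ≥ 0`. -/
theorem sdiep_three_iff (lam mu : ℝ) :
    (∃ D : Matrix (Fin 3) (Fin 3) ℝ, D.IsSymm ∧ DoublyStochastic D ∧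
        D.charpoly = (X - C 1) * (X - C lam) * (X - C mu)) ↔
      (-1 ≤ lam ∧ lam ≤ 1 ∧ -1 ≤ mu ∧ mu ≤ 1 ∧
        0 ≤ lam + 3 * mu + 2 ∧ 0 ≤ 3 * lam + mu + 2) := by
  constructor
  · rintro ⟨D, hsym, ⟨hnn, hrow, hcol⟩, hcp⟩
    have htr : D.trace = 1 + lam + mu := by
      have h := Matrix.trace_eq_neg_charpoly_coeff D
      rw [hcp] at h
      rw [show Fintype.card (Fin 3) - 1 = 2 from rfl, coeff2'] at h
      rw [h]; ring
    have hdet : D.det = lam * mu := by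
      have h := Matrix.det_eq_sign_charpoly_coeff D
      rw [hcp] at h
      rw [show Fintype.card (Fin 3) = 3 from rfl, coeff0'] at h
      rw [h]; ring
    rw [Matrix.trace_fin_three] at htr
    rw [Matrix.det_fin_three] at hdet
    have h10 : D 1 0 = D 0 1 := hsym.apply 0 1
    have h20 : D 2 0 = D 0 2 := hsym.apply 0 2
    have h21 : D 2 1 = D 1 2 := hsym.apply 1 2
    have hr0 := hrow 0; have hr1 := hrow 1; have hr2 := hrow 2
    rw [Fin.sum_univ_three] at hr0 hr1 hr2
    have hp : 0 ≤ D 0 1 := hnn 0 1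
    have hq : 0 ≤ D 0 2 := hnn 0 2
    have hr : 0 ≤ D 1 2 := hnn 1 2
    have ha : 0 ≤ D 0 0 := hnn 0 0
    have hb : 0 ≤ D 1 1 := hnn 1 1
    have hc : 0 ≤ D 2 2 := hnn 2 2
    have hA : D 0 0 = 1 - D 0 1 - D 0 2 := by linarith
    have hB : D 1 1 = 1 - D 0 1 - D 1 2 := by rw [h10] at hr1; linarith
    have hC : D 2 2 = 1 - D 0 2 - D 1 2 := by rw [h20, h21] at hr2; linarith
    rw [hA, hB, hC] at htr
    rw [h10, h20, h21, hA, hB, hC] at hdet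
    rw [hA] at ha; rw [hB] at hb; rw [hC] at hc
    exact sdiep_ineqs (D 0 1) (D 0 2) (D 1 2) lam mu hp hq hr ha hb hc
      (by linarith) (by linear_combination -hdet)
  · rintro ⟨hl, hl1, hm, hm1, h13, h31⟩
    rcases le_total mu lam with h | h
    · exact sdiep_construct lam mu h hl1 hm1 h13 h31
    · obtain ⟨D, h1, h2, h3⟩ := sdiep_construct mu lam h hm1 hl1 (by linarith) (by linarith)
      exact ⟨D, h1, h2, by rw [h3]; ring⟩
end

section
/- Let k ≥ 1, n = 4k+1, m = 2k, and let 1 ≥ λ₂ ≥ ... ≥ λₙ ≥ −1 be real numbers with 1 + λ₂ + ... + λₙ ≥ 0. Let α₁ < α₂ < ... < α_m be the increasing enumeration of the set {j : 3 ≤ j ≤ n−1, j ≡ 0 or 3 (mod 4)} (namely 3, 4, 7, 8, ..., n−2, n−1), and let β₁ < ... < β_{m−1} be the increasing enumeration of {j : 5 ≤ j ≤ n, j ≡ 1 or 2 (mod 4)} (namely 5, 6, 9, 10, ..., n−4, n−3, n). If both 1/n + ((n−m−1)/(n(m+1)))·λ₂ + Σ_{j=1}^{m} λ_{α_j}/((m−j+1)(m−j+2))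 ≥ 0 and 1/n + ((n−m)/(n·m))·λ₂ + Σ_{j=1}^{m−1} λ_{β_j}/((m−j)(m−j+1)) ≥ 0 hold, then there exists an n×n symmetric doubly stochastic matrix whose eigenvalues, counted with algebraic multiplicity, are 1, λ₂, ..., λₙ. -/
open Matrix Polynomial

namespace SdiepAux

lemma sum_two_blocks (N a : ℕ) (c d : ℝ) (h : a ≤ N) :
    ∑ x ∈ Finset.range N, (if x < a then c else d) = a * c + ((N - a : ℕ) : ℝ) * d := by
  rw [Finset.range_eq_Ico, ← Finset.sum_Ico_consecutive _ (Nat.zero_le a) h]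
  have h1 : ∑ x ∈ Finset.Ico 0 a, (if x < a then c else d) = a * c := by
    rw [Finset.sum_congr rfl fun x hx => if_pos (Finset.mem_Ico.mp hx).2]
    simp [mul_comm]
  have h2 : ∑ x ∈ Finset.Ico a N, (if x < a then c else d) = ((N - a : ℕ) : ℝ) * d := by
    rw [Finset.sum_congr rfl fun x hx => if_neg (not_lt.mpr (Finset.mem_Ico.mp hx).1)]
    simp [Nat.card_Ico, mul_comm]
  rw [h1, h2]

lemma sum_chain (N o t : ℕ) (c d : ℝ) (h : o + t < N) :
    ∑ x ∈ Finset.range N,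
      (if x < o then 0 else if x < o + t then c else if x = o + t then d else 0)
      = t * c + d := by
  rw [Finset.range_eq_Ico, ← Finset.sum_Ico_consecutive _ (Nat.zero_le o) (by omega : o ≤ N),
    ← Finset.sum_Ico_consecutive _ (by omega : o ≤ o + t) (by omega : o + t ≤ N)]
  have h1 : ∑ x ∈ Finset.Ico 0 o,
      (if x < o then (0:ℝ) else if x < o + t then c else if x = o + t then d else 0) = 0 := by
    rw [Finset.sum_congr rfl fun x hx => if_pos (Finset.mem_Ico.mp hx).2]
    simp
  have h2 : ∑ x ∈ Finset.Ico o (o + t),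
      (if x < o then (0:ℝ) else if x < o + t then c else if x = o + t then d else 0) = t * c := by
    rw [Finset.sum_congr rfl fun x hx => by
      rw [if_neg (not_lt.mpr (Finset.mem_Ico.mp hx).1), if_pos (Finset.mem_Ico.mp hx).2]]
    simp [Nat.card_Ico, mul_comm]
  have h3 : ∑ x ∈ Finset.Ico (o + t) N,
      (if x < o then (0:ℝ) else if x < o + t then c else if x = o + t then d else 0) = d := by
    rw [Finset.sum_congr rfl (g := fun x => if x = o + t then d else 0) fun x hx => by
      have hx' := Finset.mem_Ico.mp hx
      rw [if_neg (by omega), if_neg (by omega)]]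
    rw [Finset.sum_ite_eq' (Finset.Ico (o+t) N) (o+t) (fun _ => d)]
    simp [h]
  rw [h1, h2, h3]; ring

lemma sum_tel (a : ℕ) (ha : 1 ≤ a) : ∀ b, a ≤ b + 1 →
    ∑ t ∈ Finset.Icc a b, (1:ℝ) / (t * (t+1)) = 1 / a - 1 / (b+1) := by
  intro b
  induction b with
  | zero =>
    intro h
    interval_cases a
    simp
  | succ b ih =>
    intro h
    rcases Nat.lt_or_ge (b+1) a with h' | h'
    · have he : Finset.Icc a (b+1) = ∅ := Finset.Icc_eq_empty (by omega)
      rw [he]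
      have : a = b + 2 := by omega
      subst this
      push_cast
      simp only [Finset.sum_empty]
      rw [eq_comm, sub_eq_zero]
      norm_num
      ring
    · rw [Finset.sum_Icc_succ_top (by omega : a ≤ b + 1), ih (by omega)]
      have hb : ((b:ℝ)+1) ≠ 0 := by positivity
      have hb2 : ((b:ℝ)+1+1) ≠ 0 := by positivity
      have ha' : ((a:ℝ)) ≠ 0 := by positivity
      push_cast
      field_simp
      ring

lemma div_le_div_aux {r v : ℝ} (t : ℕ) (ht : 1 ≤ t) (h : r ≤ v) :
    r / (t * (t+1)) ≤ v / (t * (t+1)) := by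
  have h1 : (1:ℝ) ≤ (t:ℝ) := by exact_mod_cast ht
  have h0 : (0:ℝ) < (t:ℝ) * (t+1) := by nlinarith
  gcongr


lemma sum_ge_ref (ν : ℕ → ℝ) (a b : ℕ) (ha : 1 ≤ a) (hab : a ≤ b + 1) (r : ℝ)
    (h : ∀ t, a ≤ t → t ≤ b → r ≤ ν t) :
    r * (1 / a - 1 / (b+1)) ≤ ∑ t ∈ Finset.Icc a b, ν t / (t * (t+1)) := by
  have key : ∑ t ∈ Finset.Icc a b, r / (t * (t+1)) ≤ ∑ t ∈ Finset.Icc a b, ν t / (t * (t+1)) := by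
    apply Finset.sum_le_sum
    intro t ht
    have ht' := Finset.mem_Icc.mp ht
    exact div_le_div_aux t (by omega) (h t ht'.1 ht'.2)
  calc r * (1 / a - 1 / (b+1)) = ∑ t ∈ Finset.Icc a b, r / (t * (t+1)) := by
        rw [← sum_tel a ha b hab, Finset.mul_sum]
        exact Finset.sum_congr rfl fun t _ => by rw [mul_one_div]
    _ ≤ _ := key

lemma sum_le_ref (ν : ℕ → ℝ) (a b : ℕ) (ha : 1 ≤ a) (hab : a ≤ b + 1) (r : ℝ)
    (h : ∀ t, a ≤ t → t ≤ b → ν t ≤ r) :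
    ∑ t ∈ Finset.Icc a b, ν t / (t * (t+1)) ≤ r * (1 / a - 1 / (b+1)) := by
  have key : ∑ t ∈ Finset.Icc a b, ν t / (t * (t+1)) ≤ ∑ t ∈ Finset.Icc a b, r / (t * (t+1)) := by
    apply Finset.sum_le_sum
    intro t ht
    have ht' := Finset.mem_Icc.mp ht
    exact div_le_div_aux t (by omega) (h t ht'.1 ht'.2)
  calc ∑ t ∈ Finset.Icc a b, ν t / (t * (t+1)) ≤ ∑ t ∈ Finset.Icc a b, r / (t * (t+1)) := key
    _ = r * (1 / a - 1 / (b+1)) := by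
        rw [← sum_tel a ha b hab, Finset.mul_sum]
        exact Finset.sum_congr rfl fun t _ => by rw [mul_one_div]

/-- Soules chain vector (unnormalized, offset 0): `1` on `[0,t)`, `-t` at `t`, `0` after. -/
def cw (t x : ℕ) : ℝ := if x < t then 1 else if x = t then -((t : ℕ) : ℝ) else 0

lemma chain_offdiag (ν : ℕ → ℝ) (q x y : ℕ) (hxy : x < y) (hyq : y ≤ q) :
    ∑ t ∈ Finset.Icc 1 q, ν t / (t * (t+1)) * (cw t x * cw t y)
      = -(ν y) / (y+1) + ∑ t ∈ Finset.Icc (y+1) q, ν t / (t * (t+1)) := by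
  have hsplit := Finset.sum_Ico_consecutive (fun t => ν t / (t * (t+1)) * (cw t x * cw t y))
    (by omega : 1 ≤ y + 1) (by omega : y + 1 ≤ q + 1)
  have e1 : Finset.Icc 1 q = Finset.Ico 1 (q+1) := by rw [Finset.Ico_add_one_right_eq_Icc]
  have e2 : Finset.Icc 1 y = Finset.Ico 1 (y+1) := by rw [Finset.Ico_add_one_right_eq_Icc]
  have e3 : Finset.Icc (y+1) q = Finset.Ico (y+1) (q+1) := by rw [Finset.Ico_add_one_right_eq_Icc]
  rw [e1, ← hsplit, ← e2, ← e3]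
  have p1 : ∑ t ∈ Finset.Icc 1 y, ν t / (t * (t+1)) * (cw t x * cw t y) = -(ν y) / (y+1) := by
    rw [Finset.sum_eq_single_of_mem y (Finset.mem_Icc.mpr ⟨by omega, le_refl y⟩)]
    · have hcx : cw y x = 1 := if_pos hxy
      have hcy : cw y y = -((y:ℕ):ℝ) := by rw [cw, if_neg (lt_irrefl y), if_pos rfl]
      rw [hcx, hcy]
      have hy1 : (1:ℝ) ≤ (y:ℝ) := by exact_mod_cast (by omega : 1 ≤ y)
      have h0 : ((y:ℝ)) ≠ 0 := by nlinarith
      have h1 : ((y:ℝ)+1) ≠ 0 := by nlinarith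
      field_simp
    · intro t ht hne
      have ht' := Finset.mem_Icc.mp ht
      have : cw t y = 0 := by rw [cw, if_neg (by omega), if_neg (by omega)]
      rw [this, mul_zero, mul_zero]
  have p2 : ∑ t ∈ Finset.Icc (y+1) q, ν t / (t * (t+1)) * (cw t x * cw t y)
      = ∑ t ∈ Finset.Icc (y+1) q, ν t / (t * (t+1)) := by
    apply Finset.sum_congr rfl
    intro t ht
    have ht' := Finset.mem_Icc.mp ht
    have hx : cw t x = 1 := if_pos (by omega)
    have hy : cw t y = 1 := if_pos (by omega)
    rw [hx, hy, mul_one, mul_one]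
  rw [p1, p2]

lemma chain_diag (ν : ℕ → ℝ) (q x : ℕ) (hx : 1 ≤ x) (hxq : x ≤ q) :
    ∑ t ∈ Finset.Icc 1 q, ν t / (t * (t+1)) * (cw t x * cw t x)
      = ν x * (x / (x+1)) + ∑ t ∈ Finset.Icc (x+1) q, ν t / (t * (t+1)) := by
  have hsplit := Finset.sum_Ico_consecutive (fun t => ν t / (t * (t+1)) * (cw t x * cw t x))
    (by omega : 1 ≤ x + 1) (by omega : x + 1 ≤ q + 1)
  have e1 : Finset.Icc 1 q = Finset.Ico 1 (q+1) := by rw [Finset.Ico_add_one_right_eq_Icc]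
  have e2 : Finset.Icc 1 x = Finset.Ico 1 (x+1) := by rw [Finset.Ico_add_one_right_eq_Icc]
  have e3 : Finset.Icc (x+1) q = Finset.Ico (x+1) (q+1) := by rw [Finset.Ico_add_one_right_eq_Icc]
  rw [e1, ← hsplit, ← e2, ← e3]
  have p1 : ∑ t ∈ Finset.Icc 1 x, ν t / (t * (t+1)) * (cw t x * cw t x)
      = ν x * (x / (x+1)) := by
    rw [Finset.sum_eq_single_of_mem x (Finset.mem_Icc.mpr ⟨hx, le_refl x⟩)]
    · have hcx : cw x x = -((x:ℕ):ℝ) := by rw [cw, if_neg (lt_irrefl x), if_pos rfl]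
      rw [hcx]
      have hy1 : (1:ℝ) ≤ (x:ℝ) := by exact_mod_cast hx
      have h0 : ((x:ℝ)) ≠ 0 := by nlinarith
      have h1 : ((x:ℝ)+1) ≠ 0 := by nlinarith
      field_simp
    · intro t ht hne
      have ht' := Finset.mem_Icc.mp ht
      have : cw t x = 0 := by rw [cw, if_neg (by omega), if_neg (by omega)]
      rw [this, mul_zero, mul_zero]
  have p2 : ∑ t ∈ Finset.Icc (x+1) q, ν t / (t * (t+1)) * (cw t x * cw t x)
      = ∑ t ∈ Finset.Icc (x+1) q, ν t / (t * (t+1)) := by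
    apply Finset.sum_congr rfl
    intro t ht
    have ht' := Finset.mem_Icc.mp ht
    have hx1 : cw t x = 1 := if_pos (by omega)
    rw [hx1, mul_one, mul_one]
  rw [p1, p2]

lemma chain_diag0 (ν : ℕ → ℝ) (q : ℕ) :
    ∑ t ∈ Finset.Icc 1 q, ν t / (t * (t+1)) * (cw t 0 * cw t 0)
      = ∑ t ∈ Finset.Icc 1 q, ν t / (t * (t+1)) := by
  apply Finset.sum_congr rfl
  intro t ht
  have ht' := Finset.mem_Icc.mp ht
  have h1 : cw t 0 = 1 := if_pos (by omega)
  rw [h1, mul_one, mul_one]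

/-- Unnormalized eigenvector family. Coordinates `0..2m`; block `P = [0,m]`, `Q = [m+1,2m]`. -/
def uvec (m i x : ℕ) : ℝ :=
  if i = 0 then 1
  else if i = 1 then (if x ≤ m then ((m : ℕ) : ℝ) else -(((m+1 : ℕ) : ℝ)))
  else if i ≤ m + 1 then
    (if x < i - 1 then 1 else if x = i - 1 then -(((i - 1 : ℕ) : ℝ)) else 0)
  else
    (if x ≤ m then 0 else if x < i then 1 else if x = i then -(((i - m - 1 : ℕ) : ℝ)) else 0)

lemma uvec_zero (m x : ℕ) : uvec m 0 x = 1 := by simp [uvec]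

lemma uvec_one (m x : ℕ) :
    uvec m 1 x = if x ≤ m then ((m : ℕ) : ℝ) else -(((m+1 : ℕ) : ℝ)) := by
  simp [uvec]

lemma uvec_P (m i x : ℕ) (h2 : 2 ≤ i) (h : i ≤ m + 1) :
    uvec m i x = if x < i - 1 then 1 else if x = i - 1 then -(((i - 1 : ℕ) : ℝ)) else 0 := by
  rw [uvec, if_neg (by omega), if_neg (by omega), if_pos h]

lemma uvec_Q (m i x : ℕ) (h : m + 2 ≤ i) :
    uvec m i x = if x ≤ m then 0
      else if x < i then 1 else if x = i then -(((i - m - 1 : ℕ) : ℝ)) else 0 := by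
  rw [uvec, if_neg (by omega), if_neg (by omega), if_neg (by omega)]

/-- Squared norms of the `uvec` family. -/
def Nval (m i : ℕ) : ℕ :=
  if i = 0 then 2*m+1
  else if i = 1 then m*(m+1)*(2*m+1)
  else if i ≤ m + 1 then (i-1)*i
  else (i-m-1)*(i-m)

lemma Nval_pos (m i : ℕ) (hm : 1 ≤ m) (hi : i ≤ 2*m) : 0 < Nval m i := by
  rw [Nval]
  split_ifs
  · omega
  · exact Nat.mul_pos (Nat.mul_pos (by omega) (by omega)) (by omega)
  · exact Nat.mul_pos (by omega) (by omega)
  · exact Nat.mul_pos (by omega) (by omega)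

lemma orth (m : ℕ) (hm : 2 ≤ m) (i j : ℕ) (hi : i ≤ 2*m) (hj : j ≤ 2*m) :
    ∑ x ∈ Finset.range (2*m+1), uvec m i x * uvec m j x
      = if i = j then ((Nval m i : ℕ) : ℝ) else 0 := by
  suffices H : ∀ i j, i ≤ j → j ≤ 2*m →
      ∑ x ∈ Finset.range (2*m+1), uvec m i x * uvec m j x
        = if i = j then ((Nval m i : ℕ) : ℝ) else 0 by
    rcases le_total i j with hij | hij
    · exact H i j hij hj
    · rw [Finset.sum_congr rfl fun x _ => mul_comm (uvec m i x) (uvec m j x), H j i hij hi]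
      by_cases h : i = j
      · subst h; simp
      · rw [if_neg h, if_neg (fun h' => h h'.symm)]
  intro i j hij hj
  rcases Nat.eq_zero_or_pos i with hi0 | hi1
  · subst hi0
    rcases Nat.eq_zero_or_pos j with hj0 | hj1
    · subst hj0
      rw [if_pos rfl,
        Finset.sum_congr rfl (fun x _ => by rw [uvec_zero, mul_one]), Finset.sum_const]
      rw [Nval, if_pos rfl]
      simp
    rcases Nat.lt_or_ge j 2 with hj2 | hj2
    · have : j = 1 := by omega
      subst this
      rw [if_neg (by omega)]
      have hc : ∀ x ∈ Finset.range (2*m+1), uvec m 0 x * uvec m 1 x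
          = (if x < m+1 then ((m:ℕ):ℝ) else -(((m+1:ℕ):ℝ))) := by
        intro x _
        rw [uvec_zero, uvec_one, one_mul]
        split_ifs <;> first | rfl | ring1 | omega | (exfalso; omega)
      rw [Finset.sum_congr rfl hc, sum_two_blocks _ _ _ _ (by omega),
        show 2*m+1 - (m+1) = m from by omega]
      push_cast; ring
    rcases Nat.lt_or_ge j (m+2) with hjP | hjQ
    · rw [if_neg (by omega)]
      have hc : ∀ x ∈ Finset.range (2*m+1), uvec m 0 x * uvec m j x
          = (if x < 0 then 0 else if x < 0 + (j-1) then 1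
             else if x = 0 + (j-1) then -(((j-1:ℕ):ℝ)) else 0) := by
        intro x _
        rw [uvec_zero, uvec_P m j x (by omega) (by omega), one_mul]
        split_ifs <;> first | rfl | ring1 | omega | (exfalso; omega)
      rw [Finset.sum_congr rfl hc, sum_chain _ _ _ _ _ (by omega)]
      ring
    · rw [if_neg (by omega)]
      have hc : ∀ x ∈ Finset.range (2*m+1), uvec m 0 x * uvec m j x
          = (if x < m+1 then 0 else if x < (m+1) + (j-m-1) then 1
             else if x = (m+1) + (j-m-1) then -(((j-m-1:ℕ):ℝ)) else 0) := by
        intro x _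
        rw [uvec_zero, uvec_Q m j x (by omega), one_mul]
        split_ifs <;> first | rfl | ring1 | omega | (exfalso; omega)
      rw [Finset.sum_congr rfl hc, sum_chain _ _ _ _ _ (by omega)]
      ring
  rcases Nat.lt_or_ge i 2 with hi2 | hi2
  · have : i = 1 := by omega
    subst this
    rcases Nat.lt_or_ge j 2 with hj2 | hj2
    · have : j = 1 := by omega
      subst this
      rw [if_pos rfl]
      have hc : ∀ x ∈ Finset.range (2*m+1), uvec m 1 x * uvec m 1 x
          = (if x < m+1 then ((m:ℕ):ℝ) * ((m:ℕ):ℝ) else (((m+1:ℕ):ℝ)) * (((m+1:ℕ):ℝ))) := by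
        intro x _
        rw [uvec_one]
        split_ifs <;> first | rfl | ring1 | omega | (exfalso; omega)
      rw [Finset.sum_congr rfl hc, sum_two_blocks _ _ _ _ (by omega),
        show 2*m+1 - (m+1) = m from by omega]
      rw [Nval, if_neg (by omega), if_pos rfl]
      push_cast; ring
    rcases Nat.lt_or_ge j (m+2) with hjP | hjQ
    · rw [if_neg (by omega)]
      have hc : ∀ x ∈ Finset.range (2*m+1), uvec m 1 x * uvec m j x
          = (if x < 0 then 0 else if x < 0 + (j-1) then ((m:ℕ):ℝ)
             else if x = 0 + (j-1) then ((m:ℕ):ℝ) * (-(((j-1:ℕ):ℝ))) else 0) := by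
        intro x _
        rw [uvec_one, uvec_P m j x (by omega) (by omega)]
        split_ifs <;> first | rfl | ring1 | omega | (exfalso; omega)
      rw [Finset.sum_congr rfl hc, sum_chain _ _ _ _ _ (by omega)]
      ring
    · rw [if_neg (by omega)]
      have hc : ∀ x ∈ Finset.range (2*m+1), uvec m 1 x * uvec m j x
          = (if x < m+1 then 0 else if x < (m+1) + (j-m-1) then -(((m+1:ℕ):ℝ))
             else if x = (m+1) + (j-m-1) then (((m+1:ℕ):ℝ)) * (((j-m-1:ℕ):ℝ)) else 0) := by
        intro x _
        rw [uvec_one, uvec_Q m j x (by omega)]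
        split_ifs <;> first | rfl | ring1 | omega | (exfalso; omega)
      rw [Finset.sum_congr rfl hc, sum_chain _ _ _ _ _ (by omega)]
      ring
  rcases Nat.lt_or_ge i (m+2) with hiP | hiQ
  · rcases Nat.lt_or_ge j (m+2) with hjP | hjQ
    · by_cases hij' : i = j
      · subst hij'
        rw [if_pos rfl]
        have hc : ∀ x ∈ Finset.range (2*m+1), uvec m i x * uvec m i x
            = (if x < 0 then 0 else if x < 0 + (i-1) then 1
               else if x = 0 + (i-1) then (((i-1:ℕ):ℝ)) * (((i-1:ℕ):ℝ)) else 0) := by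
          intro x _
          rw [uvec_P m i x (by omega) (by omega)]
          split_ifs <;> first | rfl | ring1 | omega | (exfalso; omega)
        rw [Finset.sum_congr rfl hc, sum_chain _ _ _ _ _ (by omega)]
        rw [Nval, if_neg (by omega), if_neg (by omega), if_pos (by omega)]
        obtain ⟨a, rfl⟩ : ∃ a, i = a + 2 := ⟨i - 2, by omega⟩
        simp only [show a + 2 - 1 = a + 1 from by omega]
        push_cast; ring
      · rw [if_neg hij']
        have hc : ∀ x ∈ Finset.range (2*m+1), uvec m i x * uvec m j x
            = (if x < 0 then 0 else if x < 0 + (i-1) then 1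
               else if x = 0 + (i-1) then -(((i-1:ℕ):ℝ)) else 0) := by
          intro x _
          rw [uvec_P m i x (by omega) (by omega), uvec_P m j x (by omega) (by omega)]
          split_ifs <;> first | rfl | ring1 | omega | (exfalso; omega)
        rw [Finset.sum_congr rfl hc, sum_chain _ _ _ _ _ (by omega)]
        ring
    · rw [if_neg (by omega)]
      apply Finset.sum_eq_zero
      intro x _
      rw [uvec_P m i x (by omega) (by omega), uvec_Q m j x (by omega)]
      split_ifs <;> first | rfl | ring1 | omega | (exfalso; omega)
  · by_cases hij' : i = j
    · subst hij'
      rw [if_pos rfl]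
      have hc : ∀ x ∈ Finset.range (2*m+1), uvec m i x * uvec m i x
          = (if x < m+1 then 0 else if x < (m+1) + (i-m-1) then 1
             else if x = (m+1) + (i-m-1) then (((i-m-1:ℕ):ℝ)) * (((i-m-1:ℕ):ℝ)) else 0) := by
        intro x _
        rw [uvec_Q m i x (by omega)]
        split_ifs <;> first | rfl | ring1 | omega | (exfalso; omega)
      rw [Finset.sum_congr rfl hc, sum_chain _ _ _ _ _ (by omega)]
      rw [Nval, if_neg (by omega), if_neg (by omega), if_neg (by omega)]
      obtain ⟨a, rfl⟩ : ∃ a, i = m + 2 + a := ⟨i - m - 2, by omega⟩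
      simp only [show m + 2 + a - m - 1 = a + 1 from by omega,
        show m + 2 + a - m = a + 2 from by omega]
      push_cast; ring
    · rw [if_neg hij']
      have hc : ∀ x ∈ Finset.range (2*m+1), uvec m i x * uvec m j x
          = (if x < m+1 then 0 else if x < (m+1) + (i-m-1) then 1
             else if x = (m+1) + (i-m-1) then -(((i-m-1:ℕ):ℝ)) else 0) := by
        intro x _
        rw [uvec_Q m i x (by omega), uvec_Q m j x (by omega)]
        split_ifs <;> first | rfl | ring1 | omega | (exfalso; omega)
      rw [Finset.sum_congr rfl hc, sum_chain _ _ _ _ _ (by omega)]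
      ring

/-- `α`-indices: `3,4,7,8,…` -/
def Aidx (j : ℕ) : ℕ := if j % 2 = 1 then 2*j+1 else 2*j

/-- `β`-indices: `5,6,9,10,…` -/
def Bidx (j : ℕ) : ℕ := if j % 2 = 1 then 2*j+3 else 2*j+2

/-- assignment of eigenvalue indices to eigenvector indices -/
def sig (m i : ℕ) : ℕ :=
  if i = 0 then 1 else if i = 1 then 2
  else if i ≤ m+1 then Aidx (m+2-i) else Bidx (2*m+1-i)

/-- inverse of `sig` -/
def tau (m j : ℕ) : ℕ :=
  if j = 1 then 0 else if j = 2 then 1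
  else if j % 4 = 3 then m + 2 - (j-1)/2
  else if j % 4 = 0 then m + 2 - j/2
  else if j % 4 = 1 then 2*m+1 - (j-3)/2
  else 2*m+1 - (j-2)/2

def gval (L : ℕ → ℝ) (j : ℕ) : ℝ := if j = 1 then 1 else L j

lemma sig_mem (m i : ℕ) (hme : m % 2 = 0) (hm : 2 ≤ m) (hi : i < 2*m+1) :
    1 ≤ sig m i ∧ sig m i ≤ 2*m+1 := by
  simp only [sig, Aidx, Bidx]
  split_ifs <;> omega

lemma tau_mem (m j : ℕ) (hme : m % 2 = 0) (hm : 2 ≤ m) (hj1 : 1 ≤ j) (hj2 : j ≤ 2*m+1) :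
    tau m j < 2*m+1 := by
  simp only [tau]
  split_ifs <;> omega

lemma tau_sig (m i : ℕ) (hme : m % 2 = 0) (hm : 2 ≤ m) (hi : i < 2*m+1) :
    tau m (sig m i) = i := by
  by_cases h0 : i = 0
  · subst h0; norm_num [sig, tau]
  by_cases h1 : i = 1
  · subst h1; norm_num [sig, tau]
  by_cases hP : i ≤ m + 1
  · have e : sig m i = Aidx (m+2-i) := by rw [sig, if_neg h0, if_neg h1, if_pos hP]
    rw [e, Aidx]
    by_cases hpar : (m+2-i) % 2 = 1
    · rw [if_pos hpar, tau, if_neg (by omega), if_neg (by omega), if_pos (by omega)]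
      omega
    · rw [if_neg hpar, tau, if_neg (by omega), if_neg (by omega), if_neg (by omega),
        if_pos (by omega)]
      omega
  · have e : sig m i = Bidx (2*m+1-i) := by rw [sig, if_neg h0, if_neg h1, if_neg hP]
    rw [e, Bidx]
    by_cases hpar : (2*m+1-i) % 2 = 1
    · rw [if_pos hpar, tau, if_neg (by omega), if_neg (by omega), if_neg (by omega),
        if_neg (by omega), if_pos (by omega)]
      omega
    · rw [if_neg hpar, tau, if_neg (by omega), if_neg (by omega), if_neg (by omega),
        if_neg (by omega), if_neg (by omega)]
      omega

lemma sig_tau (m j : ℕ) (hme : m % 2 = 0) (hm : 2 ≤ m) (hj1 : 1 ≤ j) (hj2 : j ≤ 2*m+1) :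
    sig m (tau m j) = j := by
  by_cases h1 : j = 1
  · subst h1; norm_num [sig, tau]
  by_cases h2 : j = 2
  · subst h2; norm_num [sig, tau]
  by_cases h3 : j % 4 = 3
  · have e : tau m j = m + 2 - (j-1)/2 := by
      rw [tau, if_neg h1, if_neg h2, if_pos h3]
    rw [e, sig, if_neg (by omega), if_neg (by omega), if_pos (by omega), Aidx,
      if_pos (by omega)]
    omega
  by_cases h4 : j % 4 = 0
  · have e : tau m j = m + 2 - j/2 := by
      rw [tau, if_neg h1, if_neg h2, if_neg h3, if_pos h4]
    rw [e, sig, if_neg (by omega), if_neg (by omega), if_pos (by omega), Aidx,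
      if_neg (by omega)]
    omega
  by_cases h5 : j % 4 = 1
  · have e : tau m j = 2*m+1 - (j-3)/2 := by
      rw [tau, if_neg h1, if_neg h2, if_neg h3, if_neg h4, if_pos h5]
    rw [e, sig, if_neg (by omega), if_neg (by omega), if_neg (by omega), Bidx,
      if_pos (by omega)]
    omega
  · have e : tau m j = 2*m+1 - (j-2)/2 := by
      rw [tau, if_neg h1, if_neg h2, if_neg h3, if_neg h4, if_neg h5]
    rw [e, sig, if_neg (by omega), if_neg (by omega), if_neg (by omega), Bidx,
      if_neg (by omega)]
    omega

/-- The matrix whose rows are the `uvec`s. -/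
def Umat (n m : ℕ) : Matrix (Fin n) (Fin n) ℝ := Matrix.of fun i x => uvec m i.1 x.1

lemma UUt (n m : ℕ) (hm : 2 ≤ m) (hn : n = 2*m+1) :
    Umat n m * (Umat n m)ᵀ = Matrix.diagonal (fun i : Fin n => ((Nval m i.1 : ℕ) : ℝ)) := by
  subst hn
  ext i j
  have hlhs : (Umat (2*m+1) m * (Umat (2*m+1) m)ᵀ) i j
      = ∑ x ∈ Finset.range (2*m+1), uvec m i.1 x * uvec m j.1 x := by
    rw [Matrix.mul_apply]
    rw [← Fin.sum_univ_eq_sum_range (fun x => uvec m i.1 x * uvec m j.1 x) (2*m+1)]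
    rfl
  rw [hlhs, orth m hm i.1 j.1 (by omega) (by omega)]
  by_cases h : i = j
  · subst h
    rw [if_pos rfl, Matrix.diagonal_apply_eq]
  · rw [if_neg (fun hc => h (Fin.ext hc)), Matrix.diagonal_apply_ne _ h]

lemma charpoly_diag {p : ℕ} (d : Fin p → ℝ) :
    (Matrix.diagonal d).charpoly = ∏ i, (X - C (d i)) := by
  rw [Matrix.charpoly]
  have hc : charmatrix (Matrix.diagonal d) = Matrix.diagonal (fun i => (X : ℝ[X]) - C (d i)) := by
    apply Matrix.ext
    intro i j
    by_cases h : i = j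
    · subst h
      rw [charmatrix_apply_eq, Matrix.diagonal_apply_eq (fun i => (X : ℝ[X]) - C (d i)) i,
        Matrix.diagonal_apply_eq d i]
    · rw [charmatrix_apply_ne _ _ _ h, Matrix.diagonal_apply_ne _ h,
        Matrix.diagonal_apply_ne _ h]
      simp
  rw [hc, Matrix.det_diagonal]

lemma charpoly_conj {p : ℕ} (U M : Matrix (Fin p) (Fin p) ℝ) (h : IsUnit U.det) :
    (U⁻¹ * M * U).charpoly = M.charpoly := by
  have hUU : U⁻¹ * U = 1 := Matrix.nonsing_inv_mul U h
  have key : charmatrix (U⁻¹ * M * U) = (U⁻¹).map C * charmatrix M * U.map C := by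
    unfold charmatrix
    rw [Matrix.mul_sub, Matrix.sub_mul]
    congr 1
    · have hcomm : (U⁻¹).map C * Matrix.scalar (Fin p) (X : ℝ[X])
          = Matrix.scalar (Fin p) (X : ℝ[X]) * (U⁻¹).map C :=
        ((Matrix.scalar_commute (X : ℝ[X]) (fun r' => Commute.all _ _) ((U⁻¹).map C))).symm
      rw [hcomm, Matrix.mul_assoc]
      have : (U⁻¹).map C * U.map C = 1 := by
        rw [← Matrix.map_mul, hUU]
        exact Matrix.map_one _ (map_zero C) (map_one C)
      rw [this, Matrix.mul_one]
    · simp only [RingHom.mapMatrix_apply]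
      rw [← Matrix.map_mul, ← Matrix.map_mul]
  rw [Matrix.charpoly, Matrix.charpoly, key, Matrix.det_mul, Matrix.det_mul]
  have hdet : ((U⁻¹).map C).det * (U.map C).det = 1 := by
    rw [← Matrix.det_mul, ← Matrix.map_mul, hUU]
    rw [Matrix.map_one _ (map_zero C) (map_one C), Matrix.det_one]
  calc ((U⁻¹).map C).det * (charmatrix M).det * (U.map C).det
      = ((U⁻¹).map C).det * (U.map C).det * (charmatrix M).det := by ring
    _ = (charmatrix M).det := by rw [hdet, one_mul]

lemma anti_of_dec (L : ℕ → ℝ) (n : ℕ) (hdec : ∀ j, 2 ≤ j → j < n → L (j+1) ≤ L j) :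
    ∀ a b, 2 ≤ a → a ≤ b → b ≤ n → L b ≤ L a := by
  intro a b ha hab hbn
  have H : ∀ b, a ≤ b → (b ≤ n → L b ≤ L a) :=
    Nat.le_induction (fun _ => le_refl _)
      (fun b hb ih hbn => le_trans (hdec b (by omega) (by omega)) (ih (by omega)))
  exact H b hab hbn

lemma Aidx_mono {a b : ℕ} (h : a ≤ b) : Aidx a ≤ Aidx b := by
  rw [Aidx, Aidx]; split_ifs <;> omega

lemma Bidx_mono {a b : ℕ} (h : a ≤ b) : Bidx a ≤ Bidx b := by
  rw [Bidx, Bidx]; split_ifs <;> omega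

lemma Aidx_lb (j : ℕ) (h : 1 ≤ j) : 3 ≤ Aidx j := by rw [Aidx]; split_ifs <;> omega

lemma Aidx_ub (j m : ℕ) (h : j ≤ m) : Aidx j ≤ 2*m+1 := by rw [Aidx]; split_ifs <;> omega

lemma Bidx_lb (j : ℕ) (h : 1 ≤ j) : 5 ≤ Bidx j := by rw [Bidx]; split_ifs <;> omega

lemma Bidx_ub (j m : ℕ) (h : j + 1 ≤ m) : Bidx j ≤ 2*m+1 := by rw [Bidx]; split_ifs <;> omega

lemma uvec_P_cw (m t x : ℕ) : uvec m (t+1) x = cw t x ∨ ¬ (1 ≤ t ∧ t ≤ m) := by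
  by_cases h : 1 ≤ t ∧ t ≤ m
  · left
    rw [uvec_P m (t+1) x (by omega) (by omega), cw]
    simp only [Nat.add_sub_cancel]
  · right; exact h

lemma sig_P (m t : ℕ) (ht : 1 ≤ t) (htm : t ≤ m) : sig m (t+1) = Aidx (m+1-t) := by
  rw [sig, if_neg (by omega), if_neg (by omega), if_pos (by omega)]
  congr 1
  omega

lemma sig_Q (m t : ℕ) (ht : 1 ≤ t) (htm : t ≤ m - 1) (hm : 2 ≤ m) :
    sig m (m+1+t) = Bidx (m-t) := by
  rw [sig, if_neg (by omega), if_neg (by omega), if_neg (by omega)]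
  congr 1
  omega

/-- Decomposition of an entry-sum into the four groups of eigenvectors. -/
lemma entry_split (m : ℕ) (hm : 2 ≤ m) (E : ℕ → ℝ) (x y : ℕ) :
    ∑ i ∈ Finset.range (2*m+1), E i / ((Nval m i : ℕ) : ℝ) * (uvec m i x * uvec m i y)
      = E 0 / (2*(m:ℝ)+1)
        + E 1 / ((m:ℝ)*((m:ℝ)+1)*(2*(m:ℝ)+1)) * (uvec m 1 x * uvec m 1 y)
        + ∑ t ∈ Finset.Icc 1 m, E (t+1) / ((t:ℝ)*((t:ℝ)+1)) * (uvec m (t+1) x * uvec m (t+1) y)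
        + ∑ t ∈ Finset.Icc 1 (m-1),
            E (m+1+t) / ((t:ℝ)*((t:ℝ)+1)) * (uvec m (m+1+t) x * uvec m (m+1+t) y) := by
  rw [Finset.range_eq_Ico,
    ← Finset.sum_Ico_consecutive _ (by omega : (0:ℕ) ≤ 2) (by omega : 2 ≤ 2*m+1),
    ← Finset.sum_Ico_consecutive _ (by omega : (2:ℕ) ≤ m+2) (by omega : m+2 ≤ 2*m+1)]
  have p0 : ∑ i ∈ Finset.Ico 0 2, E i / ((Nval m i : ℕ) : ℝ) * (uvec m i x * uvec m i y)
      = E 0 / (2*(m:ℝ)+1)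
        + E 1 / ((m:ℝ)*((m:ℝ)+1)*(2*(m:ℝ)+1)) * (uvec m 1 x * uvec m 1 y) := by
    rw [← Finset.range_eq_Ico, Finset.sum_range_succ, Finset.sum_range_one]
    have e0 : Nval m 0 = 2*m+1 := by rw [Nval, if_pos rfl]
    have e1 : Nval m 1 = m*(m+1)*(2*m+1) := by rw [Nval, if_neg (by omega), if_pos rfl]
    rw [e0, e1, uvec_zero, uvec_zero, mul_one]
    push_cast
    ring
  have p1 : ∑ i ∈ Finset.Ico 2 (m+2), E i / ((Nval m i : ℕ) : ℝ) * (uvec m i x * uvec m i y)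
      = ∑ t ∈ Finset.Icc 1 m, E (t+1) / ((t:ℝ)*((t:ℝ)+1)) * (uvec m (t+1) x * uvec m (t+1) y) := by
    refine Finset.sum_nbij' (fun i => i - 1) (fun t => t + 1) ?_ ?_ ?_ ?_ ?_
    · intro a ha; have := Finset.mem_Ico.mp ha; simp only [Finset.mem_Icc]; omega
    · intro a ha; have := Finset.mem_Icc.mp ha; simp only [Finset.mem_Ico]; omega
    · intro a ha; have := Finset.mem_Ico.mp ha; show a - 1 + 1 = a; omega
    · intro a ha; have := Finset.mem_Icc.mp ha; show a + 1 - 1 = a; omega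
    · intro a ha
      have ha' := Finset.mem_Ico.mp ha
      obtain ⟨c, rfl⟩ : ∃ c, a = c + 2 := ⟨a - 2, by omega⟩
      have e2 : Nval m (c+2) = (c+1) * (c+2) := by
        rw [Nval, if_neg (by omega), if_neg (by omega), if_pos (by omega)]
        congr 1
      simp only [show c + 2 - 1 = c + 1 from by omega, show c + 1 + 1 = c + 2 from by omega, e2]
      push_cast
      ring
  have p2 : ∑ i ∈ Finset.Ico (m+2) (2*m+1), E i / ((Nval m i : ℕ) : ℝ) * (uvec m i x * uvec m i y)
      = ∑ t ∈ Finset.Icc 1 (m-1),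
          E (m+1+t) / ((t:ℝ)*((t:ℝ)+1)) * (uvec m (m+1+t) x * uvec m (m+1+t) y) := by
    refine Finset.sum_nbij' (fun i => i - m - 1) (fun t => m + 1 + t) ?_ ?_ ?_ ?_ ?_
    · intro a ha; have := Finset.mem_Ico.mp ha; simp only [Finset.mem_Icc]; omega
    · intro a ha; have := Finset.mem_Icc.mp ha; simp only [Finset.mem_Ico]; omega
    · intro a ha; have := Finset.mem_Ico.mp ha; show m + 1 + (a - m - 1) = a; omega
    · intro a ha; have := Finset.mem_Icc.mp ha; show m + 1 + a - m - 1 = a; omega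
    · intro a ha
      have ha' := Finset.mem_Ico.mp ha
      obtain ⟨c, rfl⟩ : ∃ c, a = m + 2 + c := ⟨a - m - 2, by omega⟩
      have e2 : Nval m (m+2+c) = (c+1) * (c+2) := by
        rw [Nval, if_neg (by omega), if_neg (by omega), if_neg (by omega)]
        congr 1 <;> omega
      simp only [show m + 2 + c - m - 1 = c + 1 from by omega,
        show m + 1 + (c + 1) = m + 2 + c from by omega, e2]
      push_cast
      ring
  rw [p0, p1, p2]
  ring

/-- The doubly stochastic matrix. -/
noncomputable def Dmat (n m : ℕ) (E : ℕ → ℝ) : Matrix (Fin n) (Fin n) ℝ :=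
  (Umat n m)ᵀ * Matrix.diagonal (fun i : Fin n => E i.1 / ((Nval m i.1 : ℕ) : ℝ)) * Umat n m

lemma Dmat_entry (n m : ℕ) (E : ℕ → ℝ) (a b : Fin n) :
    Dmat n m E a b
      = ∑ i ∈ Finset.range n, E i / ((Nval m i : ℕ) : ℝ) * (uvec m i a.1 * uvec m i b.1) := by
  rw [Dmat, Matrix.mul_apply]
  have key : ∀ i : Fin n,
      ((Umat n m)ᵀ * Matrix.diagonal (fun i : Fin n => E i.1 / ((Nval m i.1 : ℕ) : ℝ))) a i
        * Umat n m i b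
      = (fun k => E k / ((Nval m k : ℕ) : ℝ) * (uvec m k a.1 * uvec m k b.1)) i.1 := by
    intro i
    rw [Matrix.mul_diagonal, Matrix.transpose_apply]
    show uvec m i.1 a.1 * (E i.1 / ((Nval m i.1 : ℕ) : ℝ)) * uvec m i.1 b.1 = _
    ring
  rw [Finset.sum_congr rfl (fun i _ => key i)]
  exact Fin.sum_univ_eq_sum_range
    (fun k => E k / ((Nval m k : ℕ) : ℝ) * (uvec m k a.1 * uvec m k b.1)) n

lemma Dmat_symm (n m : ℕ) (E : ℕ → ℝ) : (Dmat n m E).IsSymm := by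
  rw [Matrix.IsSymm, Dmat, Matrix.transpose_mul, Matrix.transpose_mul,
    Matrix.transpose_transpose, Matrix.diagonal_transpose, Matrix.mul_assoc]

lemma Udet_unit (n m : ℕ) (hm : 2 ≤ m) (hn : n = 2*m+1) : IsUnit (Umat n m).det := by
  have hUU := UUt n m hm hn
  have h2 : (Umat n m).det * (Umat n m)ᵀ.det = ∏ i : Fin n, ((Nval m i.1 : ℕ) : ℝ) := by
    rw [← Matrix.det_mul, hUU, Matrix.det_diagonal]
  have hne : (∏ i : Fin n, ((Nval m i.1 : ℕ) : ℝ)) ≠ 0 := by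
    apply Finset.prod_ne_zero_iff.mpr
    intro i _
    have : 0 < Nval m i.1 := Nval_pos m i.1 (by omega) (by omega)
    positivity
  have hd : (Umat n m).det ≠ 0 := by
    intro h
    rw [h, zero_mul] at h2
    exact hne h2.symm
  exact isUnit_iff_ne_zero.mpr hd

lemma Dmat_charpoly (n m : ℕ) (E : ℕ → ℝ) (hm : 2 ≤ m) (hn : n = 2*m+1) :
    (Dmat n m E).charpoly = ∏ i : Fin n, (X - C (E i.1)) := by
  have hUU := UUt n m hm hn
  have hdet := Udet_unit n m hm hn
  have hUt : (Umat n m)ᵀ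
      = (Umat n m)⁻¹ * Matrix.diagonal (fun i : Fin n => ((Nval m i.1 : ℕ) : ℝ)) := by
    rw [← hUU, ← Matrix.mul_assoc, Matrix.nonsing_inv_mul _ hdet, Matrix.one_mul]
  have hfun : (fun i : Fin n => ((Nval m i.1 : ℕ) : ℝ) * (E i.1 / ((Nval m i.1 : ℕ) : ℝ)))
      = fun i : Fin n => E i.1 := by
    funext i
    have : ((Nval m i.1 : ℕ) : ℝ) ≠ 0 := by
      have : 0 < Nval m i.1 := Nval_pos m i.1 (by omega) (by omega)
      positivity
    field_simp
  have hD : Dmat n m E = (Umat n m)⁻¹ * Matrix.diagonal (fun i : Fin n => E i.1) * Umat n m := by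
    rw [Dmat, hUt, Matrix.mul_assoc ((Umat n m)⁻¹), Matrix.diagonal_mul_diagonal, hfun]
  rw [hD, charpoly_conj _ _ hdet, charpoly_diag]

lemma Dmat_rowsum (n m : ℕ) (E : ℕ → ℝ) (hm : 2 ≤ m) (hn : n = 2*m+1) (hE0 : E 0 = 1)
    (a : Fin n) : ∑ b, Dmat n m E a b = 1 := by
  have step1 : ∑ b, Dmat n m E a b
      = ∑ i ∈ Finset.range n, ∑ b : Fin n,
          E i / ((Nval m i : ℕ) : ℝ) * (uvec m i a.1 * uvec m i b.1) := by
    rw [Finset.sum_congr rfl (fun b _ => Dmat_entry n m E a b)]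
    exact Finset.sum_comm
  rw [step1]
  have step2 : ∀ i ∈ Finset.range n, ∑ b : Fin n,
      E i / ((Nval m i : ℕ) : ℝ) * (uvec m i a.1 * uvec m i b.1)
      = if i = 0 then E 0 / ((Nval m 0 : ℕ) : ℝ) * uvec m 0 a.1 * ((Nval m 0 : ℕ) : ℝ) else 0 := by
    intro i hi
    have hsum : ∑ b : Fin n, uvec m i b.1 = if i = 0 then ((Nval m i : ℕ) : ℝ) else 0 := by
      have : ∑ b : Fin n, uvec m i b.1 = ∑ x ∈ Finset.range n, uvec m i x :=
        Fin.sum_univ_eq_sum_range (fun x => uvec m i x) n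
      rw [this]
      have horth := orth m hm i 0 (by simp at hi; omega) (by omega)
      rw [Finset.sum_congr rfl (fun x _ => by rw [uvec_zero, mul_one]) ] at horth
      rw [hn, horth]
    calc ∑ b : Fin n, E i / ((Nval m i : ℕ) : ℝ) * (uvec m i a.1 * uvec m i b.1)
        = (E i / ((Nval m i : ℕ) : ℝ) * uvec m i a.1) * ∑ b : Fin n, uvec m i b.1 := by
          rw [Finset.mul_sum]
          exact Finset.sum_congr rfl fun b _ => by ring
      _ = _ := by
          rw [hsum]
          by_cases h : i = 0
          · subst h; rw [if_pos rfl, if_pos rfl]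
          · rw [if_neg h, if_neg h, mul_zero]
  rw [Finset.sum_congr rfl step2, Finset.sum_ite_eq' (Finset.range n) 0
    (fun _ => E 0 / ((Nval m 0 : ℕ) : ℝ) * uvec m 0 a.1 * ((Nval m 0 : ℕ) : ℝ))]
  rw [if_pos (by simp; omega), hE0, uvec_zero]
  have : ((Nval m 0 : ℕ) : ℝ) ≠ 0 := by
    have : 0 < Nval m 0 := Nval_pos m 0 (by omega) (by omega)
    positivity
  field_simp

lemma uvec_P_cw' (m t x : ℕ) (h1 : 1 ≤ t) (h2 : t ≤ m) : uvec m (t+1) x = cw t x := by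
  rw [uvec_P m (t+1) x (by omega) (by omega), cw]
  simp only [Nat.add_sub_cancel]

lemma uvec_Q_cw (m t x : ℕ) (h1 : 1 ≤ t) (h2 : t ≤ m - 1) (hm : 2 ≤ m) (hx : m + 1 ≤ x) :
    uvec m (m+1+t) x = cw t (x - (m+1)) := by
  rw [uvec_Q m (m+1+t) x (by omega), if_neg (by omega), cw]
  by_cases hlt : x - (m+1) < t
  · rw [if_pos (by omega), if_pos hlt]
  · rw [if_neg (by omega), if_neg hlt]
    by_cases heq : x - (m+1) = t
    · rw [if_pos (by omega), if_pos heq]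
      simp only [show m+1+t-m-1 = t from by omega]
    · rw [if_neg (by omega), if_neg heq]

lemma uvec_Q_zero (m i x : ℕ) (h : m + 2 ≤ i) (hx : x ≤ m) : uvec m i x = 0 := by
  rw [uvec_Q m i x h, if_pos hx]

set_option maxHeartbeats 1000000 in
lemma entry_nonneg (m : ℕ) (hm2 : 2 ≤ m) (L : ℕ → ℝ)
    (hub : L 2 ≤ 1)
    (hanti : ∀ a b, 2 ≤ a → a ≤ b → b ≤ 2*m+1 → L b ≤ L a)
    (hc1 : 0 ≤ 1/(2*(m:ℝ)+1) + ((2*(m:ℝ)+1) - (m:ℝ) - 1)/((2*(m:ℝ)+1)*((m:ℝ)+1)) * L 2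
        + ∑ t ∈ Finset.Icc 1 m, L (Aidx (m+1-t)) / ((t:ℝ)*((t:ℝ)+1)))
    (hc2 : 0 ≤ 1/(2*(m:ℝ)+1) + ((2*(m:ℝ)+1) - (m:ℝ))/((2*(m:ℝ)+1)*(m:ℝ)) * L 2
        + ∑ t ∈ Finset.Icc 1 (m-1), L (Bidx (m-t)) / ((t:ℝ)*((t:ℝ)+1)))
    (x y : ℕ) (hxy : x ≤ y) (hy : y ≤ 2*m) :
    0 ≤ ∑ i ∈ Finset.range (2*m+1),
        gval L (sig m i) / ((Nval m i : ℕ) : ℝ) * (uvec m i x * uvec m i y) := by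
  have hmR : (2:ℝ) ≤ (m:ℝ) := by exact_mod_cast hm2
  have hm0 : (0:ℝ) < m := by linarith
  have hm1 : (0:ℝ) < (m:ℝ)+1 := by linarith
  have hn0 : (0:ℝ) < 2*(m:ℝ)+1 := by linarith
  have hE0 : gval L (sig m 0) = 1 := by rw [sig]; norm_num [gval]
  have hE1 : gval L (sig m 1) = L 2 := by rw [sig]; norm_num [gval]
  set FP : ℕ → ℝ := fun t => L (Aidx (m+1-t)) with hFP
  set FQ : ℕ → ℝ := fun t => L (Bidx (m-t)) with hFQ
  have hc1' : 0 ≤ 1/(2*(m:ℝ)+1) + ((2*(m:ℝ)+1) - (m:ℝ) - 1)/((2*(m:ℝ)+1)*((m:ℝ)+1)) * L 2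
      + ∑ t ∈ Finset.Icc 1 m, FP t / ((t:ℝ)*((t:ℝ)+1)) := hc1
  have hc2' : 0 ≤ 1/(2*(m:ℝ)+1) + ((2*(m:ℝ)+1) - (m:ℝ))/((2*(m:ℝ)+1)*(m:ℝ)) * L 2
      + ∑ t ∈ Finset.Icc 1 (m-1), FQ t / ((t:ℝ)*((t:ℝ)+1)) := hc2
  have hEP : ∀ t, 1 ≤ t → t ≤ m → gval L (sig m (t+1)) = FP t := by
    intro t h1 h2
    rw [sig_P m t h1 h2, gval, if_neg (by have := Aidx_lb (m+1-t) (by omega); omega)]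
  have hEQ : ∀ t, 1 ≤ t → t ≤ m - 1 → gval L (sig m (m+1+t)) = FQ t := by
    intro t h1 h2
    rw [sig_Q m t h1 h2 hm2, gval, if_neg (by have := Bidx_lb (m-t) (by omega); omega)]
  have hFPmono : ∀ t t', 1 ≤ t → t ≤ t' → t' ≤ m → FP t ≤ FP t' := by
    intro t t' h1 h2 h3
    exact hanti (Aidx (m+1-t')) (Aidx (m+1-t))
      (le_trans (by omega) (Aidx_lb (m+1-t') (by omega)))
      (Aidx_mono (by omega)) (Aidx_ub (m+1-t) m (by omega))
  have hFPub : ∀ t, 1 ≤ t → t ≤ m → FP t ≤ L 2 := by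
    intro t h1 h2
    exact hanti 2 (Aidx (m+1-t)) le_rfl
      (le_trans (by omega) (Aidx_lb (m+1-t) (by omega))) (Aidx_ub (m+1-t) m (by omega))
  have hFQmono : ∀ t t', 1 ≤ t → t ≤ t' → t' ≤ m - 1 → FQ t ≤ FQ t' := by
    intro t t' h1 h2 h3
    exact hanti (Bidx (m-t')) (Bidx (m-t))
      (le_trans (by omega) (Bidx_lb (m-t') (by omega)))
      (Bidx_mono (by omega)) (Bidx_ub (m-t) m (by omega))
  have hFQub : ∀ t, 1 ≤ t → t ≤ m - 1 → FQ t ≤ L 2 := by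
    intro t h1 h2
    exact hanti 2 (Bidx (m-t)) le_rfl
      (le_trans (by omega) (Bidx_lb (m-t) (by omega))) (Bidx_ub (m-t) m (by omega))
  rw [entry_split m hm2 _ x y, hE0, hE1]
  rcases Nat.lt_or_ge m y with hyQ | hyP
  · -- y in Q-block
    have hPzero : ∑ t ∈ Finset.Icc 1 m,
        gval L (sig m (t+1)) / ((t:ℝ)*((t:ℝ)+1)) * (uvec m (t+1) x * uvec m (t+1) y) = 0 := by
      apply Finset.sum_eq_zero
      intro t ht
      have ht' := Finset.mem_Icc.mp ht
      rw [uvec_P_cw' m t y ht'.1 ht'.2, cw, if_neg (by omega), if_neg (by omega)]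
      ring
    rw [hPzero]
    rcases Nat.lt_or_ge m x with hxQ | hxP
    · -- both in Q-block
      have hu1x : uvec m 1 x = -((m:ℝ)+1) := by
        rw [uvec_one, if_neg (by omega)]; push_cast; ring
      have hu1y : uvec m 1 y = -((m:ℝ)+1) := by
        rw [uvec_one, if_neg (by omega)]; push_cast; ring
      rw [hu1x, hu1y]
      have hQconv : ∑ t ∈ Finset.Icc 1 (m-1),
          gval L (sig m (m+1+t)) / ((t:ℝ)*((t:ℝ)+1)) * (uvec m (m+1+t) x * uvec m (m+1+t) y)
          = ∑ t ∈ Finset.Icc 1 (m-1),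
              FQ t / ((t:ℝ)*((t:ℝ)+1)) * (cw t (x-(m+1)) * cw t (y-(m+1))) := by
        apply Finset.sum_congr rfl
        intro t ht
        have ht' := Finset.mem_Icc.mp ht
        rw [hEQ t ht'.1 ht'.2, uvec_Q_cw m t x ht'.1 ht'.2 hm2 (by omega),
          uvec_Q_cw m t y ht'.1 ht'.2 hm2 (by omega)]
      rw [hQconv]
      set x' := x - (m+1) with hx'
      set y' := y - (m+1) with hy'
      have hy'm : y' ≤ m - 1 := by omega
      have heqc2 : L 2 / ((m:ℝ)*((m:ℝ)+1)*(2*(m:ℝ)+1)) * (-((m:ℝ)+1) * -((m:ℝ)+1))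
          = ((2*(m:ℝ)+1) - (m:ℝ))/((2*(m:ℝ)+1)*(m:ℝ)) * L 2 := by
        field_simp
        ring
      rcases Nat.lt_or_ge x' y' with hlt | hge
      · -- off-diagonal in Q
        rw [chain_offdiag FQ (m-1) x' y' hlt hy'm]
        set ν := FQ y' with hν
        have hνub : ν ≤ L 2 := hFQub y' (by omega) hy'm
        have hν1 : ν ≤ 1 := le_trans hνub hub
        have htail := sum_ge_ref FQ (y'+1) (m-1) (by omega) (by omega) ν
          (fun t h1 h2 => hFQmono y' t (by omega) (by omega) h2)
        have hcast : ((m-1 : ℕ) : ℝ) = (m:ℝ) - 1 := by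
          push_cast [Nat.cast_sub (by omega : 1 ≤ m)]; ring
        rw [hcast] at htail
        push_cast at htail
        have hy'0 : (0:ℝ) < (y':ℝ)+1 := by positivity
        have hfin : 0 ≤ 1/(2*(m:ℝ)+1)
            + L 2 / ((m:ℝ)*((m:ℝ)+1)*(2*(m:ℝ)+1)) * (-((m:ℝ)+1) * -((m:ℝ)+1))
            - ν/(m:ℝ) := by
          have hkey : 0 ≤ (m:ℝ)*(1 - ν) + ((m:ℝ)+1)*(L 2 - ν) :=
            add_nonneg (mul_nonneg (by linarith) (by linarith))
              (mul_nonneg (by linarith) (by linarith))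
          have heq : 1/(2*(m:ℝ)+1)
              + L 2 / ((m:ℝ)*((m:ℝ)+1)*(2*(m:ℝ)+1)) * (-((m:ℝ)+1) * -((m:ℝ)+1))
              - ν/(m:ℝ)
              = ((m:ℝ)*(1 - ν) + ((m:ℝ)+1)*(L 2 - ν)) / ((m:ℝ)*(2*(m:ℝ)+1)) := by
            field_simp
            ring
          rw [heq]
          positivity
        have harith : -(ν)/((y':ℝ)+1) + ν * (1/((y':ℝ)+1) - 1/((m:ℝ)-1+1)) = -(ν/(m:ℝ)) := by
          have hmm : (m:ℝ)-1+1 = (m:ℝ) := by ring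
          rw [hmm]
          field_simp
          ring
        have hT : -(ν)/((y':ℝ)+1) + ∑ t ∈ Finset.Icc (y'+1) (m-1), FQ t / ((t:ℝ)*((t:ℝ)+1))
            ≥ -(ν/(m:ℝ)) := by linarith [htail, harith]
        linarith [hT, hfin]
      · -- diagonal in Q
        have hxx : x' = y' := by omega
        rcases Nat.eq_zero_or_pos y' with h0 | h1
        · rw [hxx, h0, chain_diag0 FQ (m-1)]
          rw [heqc2]
          linarith [hc2']
        · rw [hxx, chain_diag FQ (m-1) y' h1 hy'm]
          have hupper := sum_le_ref FQ 1 y' (le_refl 1) (by omega) (FQ y')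
            (fun t ht1 ht2 => hFQmono t y' ht1 ht2 hy'm)
          have hsplit : ∑ t ∈ Finset.Icc 1 (m-1), FQ t / ((t:ℝ)*((t:ℝ)+1))
              = ∑ t ∈ Finset.Icc 1 y', FQ t / ((t:ℝ)*((t:ℝ)+1))
                + ∑ t ∈ Finset.Icc (y'+1) (m-1), FQ t / ((t:ℝ)*((t:ℝ)+1)) := by
            rw [show Finset.Icc 1 (m-1) = Finset.Ico 1 (m-1+1) from by rw [Finset.Ico_add_one_right_eq_Icc],
              show Finset.Icc 1 y' = Finset.Ico 1 (y'+1) from by rw [Finset.Ico_add_one_right_eq_Icc],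
              show Finset.Icc (y'+1) (m-1) = Finset.Ico (y'+1) (m-1+1) from by
                rw [Finset.Ico_add_one_right_eq_Icc]]
            exact (Finset.sum_Ico_consecutive _ (by omega) (by omega)).symm
          have hdiagval : FQ y' * ((y':ℝ)/((y':ℝ)+1))
              = FQ y' * (1/((1:ℕ):ℝ) - 1/((y':ℝ)+1)) := by
            have h1' : ((1:ℕ):ℝ) = 1 := by norm_num
            rw [h1']
            congr 1
            have : (0:ℝ) < (y':ℝ)+1 := by positivity
            field_simp
            ring
          rw [heqc2]
          linarith [hc2', hupper, hsplit, hdiagval]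
    · -- x in P-block, y in Q-block : cross entry
      have hu1x : uvec m 1 x = (m:ℝ) := by rw [uvec_one, if_pos (by omega)]
      have hu1y : uvec m 1 y = -((m:ℝ)+1) := by
        rw [uvec_one, if_neg (by omega)]; push_cast; ring
      have hQzero : ∑ t ∈ Finset.Icc 1 (m-1),
          gval L (sig m (m+1+t)) / ((t:ℝ)*((t:ℝ)+1)) * (uvec m (m+1+t) x * uvec m (m+1+t) y)
          = 0 := by
        apply Finset.sum_eq_zero
        intro t ht
        rw [uvec_Q_zero m (m+1+t) x (by have := (Finset.mem_Icc.mp ht).1; omega) hxP]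
        ring
      rw [hQzero, hu1x, hu1y]
      have heq : 1/(2*(m:ℝ)+1) + L 2 / ((m:ℝ)*((m:ℝ)+1)*(2*(m:ℝ)+1)) * ((m:ℝ) * -((m:ℝ)+1))
          + 0 + 0 = (1 - L 2)/(2*(m:ℝ)+1) := by
        field_simp
        ring
      rw [heq]
      apply div_nonneg (by linarith) (by linarith)
  · -- both in P-block
    have hu1x : uvec m 1 x = (m:ℝ) := by rw [uvec_one, if_pos (by omega)]
    have hu1y : uvec m 1 y = (m:ℝ) := by rw [uvec_one, if_pos (by omega)]
    have hQzero : ∑ t ∈ Finset.Icc 1 (m-1),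
        gval L (sig m (m+1+t)) / ((t:ℝ)*((t:ℝ)+1)) * (uvec m (m+1+t) x * uvec m (m+1+t) y)
        = 0 := by
      apply Finset.sum_eq_zero
      intro t ht
      rw [uvec_Q_zero m (m+1+t) x (by have := (Finset.mem_Icc.mp ht).1; omega) (by omega)]
      ring
    have hPconv : ∑ t ∈ Finset.Icc 1 m,
        gval L (sig m (t+1)) / ((t:ℝ)*((t:ℝ)+1)) * (uvec m (t+1) x * uvec m (t+1) y)
        = ∑ t ∈ Finset.Icc 1 m, FP t / ((t:ℝ)*((t:ℝ)+1)) * (cw t x * cw t y) := by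
      apply Finset.sum_congr rfl
      intro t ht
      have ht' := Finset.mem_Icc.mp ht
      rw [hEP t ht'.1 ht'.2, uvec_P_cw' m t x ht'.1 ht'.2, uvec_P_cw' m t y ht'.1 ht'.2]
    rw [hQzero, hPconv, hu1x, hu1y]
    have heqc1 : L 2 / ((m:ℝ)*((m:ℝ)+1)*(2*(m:ℝ)+1)) * ((m:ℝ) * (m:ℝ))
        = ((2*(m:ℝ)+1) - (m:ℝ) - 1)/((2*(m:ℝ)+1)*((m:ℝ)+1)) * L 2 := by
      field_simp
      ring
    rcases Nat.lt_or_ge x y with hlt | hge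
    · -- off-diagonal in P
      rw [chain_offdiag FP m x y hlt hyP]
      set ν := FP y with hν
      have hνub : ν ≤ L 2 := hFPub y (by omega) hyP
      have hν1 : ν ≤ 1 := le_trans hνub hub
      have htail := sum_ge_ref FP (y+1) m (by omega) (by omega) ν
        (fun t h1 h2 => hFPmono y t (by omega) (by omega) h2)
      push_cast at htail
      have hy0 : (0:ℝ) < (y:ℝ)+1 := by positivity
      have hfin : 0 ≤ 1/(2*(m:ℝ)+1)
          + L 2 / ((m:ℝ)*((m:ℝ)+1)*(2*(m:ℝ)+1)) * ((m:ℝ) * (m:ℝ)) - ν/((m:ℝ)+1) := by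
        have hkey : 0 ≤ ((m:ℝ)+1)*(1 - ν) + (m:ℝ)*(L 2 - ν) :=
          add_nonneg (mul_nonneg (by linarith) (by linarith))
            (mul_nonneg (by linarith) (by linarith))
        have heq : 1/(2*(m:ℝ)+1)
            + L 2 / ((m:ℝ)*((m:ℝ)+1)*(2*(m:ℝ)+1)) * ((m:ℝ) * (m:ℝ)) - ν/((m:ℝ)+1)
            = (((m:ℝ)+1)*(1 - ν) + (m:ℝ)*(L 2 - ν)) / (((m:ℝ)+1)*(2*(m:ℝ)+1)) := by
          field_simp
          ring
        rw [heq]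
        positivity
      have harith : -(ν)/((y:ℝ)+1) + ν * (1/((y:ℝ)+1) - 1/((m:ℝ)+1)) = -(ν/((m:ℝ)+1)) := by
        field_simp
        ring
      have hT : -(ν)/((y:ℝ)+1) + ∑ t ∈ Finset.Icc (y+1) m, FP t / ((t:ℝ)*((t:ℝ)+1))
          ≥ -(ν/((m:ℝ)+1)) := by linarith [htail, harith]
      linarith [hT, hfin]
    · -- diagonal in P
      have hxx : x = y := by omega
      rcases Nat.eq_zero_or_pos y with h0 | h1
      · rw [hxx, h0, chain_diag0 FP m]
        rw [heqc1]
        linarith [hc1']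
      · rw [hxx, chain_diag FP m y h1 hyP]
        have hupper := sum_le_ref FP 1 y (le_refl 1) (by omega) (FP y)
          (fun t ht1 ht2 => hFPmono t y ht1 ht2 hyP)
        have hsplit : ∑ t ∈ Finset.Icc 1 m, FP t / ((t:ℝ)*((t:ℝ)+1))
            = ∑ t ∈ Finset.Icc 1 y, FP t / ((t:ℝ)*((t:ℝ)+1))
              + ∑ t ∈ Finset.Icc (y+1) m, FP t / ((t:ℝ)*((t:ℝ)+1)) := by
          rw [show Finset.Icc 1 m = Finset.Ico 1 (m+1) from by rw [Finset.Ico_add_one_right_eq_Icc],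
            show Finset.Icc 1 y = Finset.Ico 1 (y+1) from by rw [Finset.Ico_add_one_right_eq_Icc],
            show Finset.Icc (y+1) m = Finset.Ico (y+1) (m+1) from by rw [Finset.Ico_add_one_right_eq_Icc]]
          exact (Finset.sum_Ico_consecutive _ (by omega) (by omega)).symm
        have hdiagval : FP y * ((y:ℝ)/((y:ℝ)+1))
            = FP y * (1/((1:ℕ):ℝ) - 1/((y:ℝ)+1)) := by
          have h1' : ((1:ℕ):ℝ) = 1 := by norm_num
          rw [h1']
          congr 1
          have : (0:ℝ) < (y:ℝ)+1 := by positivity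
          field_simp
          ring
        rw [heqc1]
        linarith [hc1', hupper, hsplit, hdiagval]

end SdiepAux

open SdiepAux in
/-- Case `n = 4k+1`, `m = 2k`: with `α_j = 2j+1` for `j` odd and `2j` for `j` even
(the increasing enumeration `3, 4, 7, 8, …, n-2, n-1`), and `β_j = 2j+3` for `j` odd and
`2j+2` for `j` even (the increasing enumeration `5, 6, 9, 10, …, n-4, n-3, n`), if both
`1/n + ((n-m-1)/(n(m+1)))λ₂ + ∑_{j=1}^{m} λ_{α_j}/((m-j+1)(m-j+2)) ≥ 0` and
`1/n + ((n-m)/(nm))λ₂ + ∑_{j=1}^{m-1} λ_{β_j}/((m-j)(m-j+1)) ≥ 0`, then `1, λ₂, …, λₙ`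
is the spectrum of an `n × n` symmetric doubly stochastic matrix. -/
theorem sdiep_4k1 (k n m : ℕ) (hk : 1 ≤ k) (hn : n = 4 * k + 1) (hm : m = 2 * k)
    (L : ℕ → ℝ) (hub : L 2 ≤ 1)
    (hdec : ∀ j, 2 ≤ j → j < n → L (j + 1) ≤ L j)
    (hlb : -1 ≤ L n)
    (htr : 0 ≤ 1 + ∑ j ∈ Finset.Icc 2 n, L j)
    (hcond1 : 0 ≤ 1 / (n : ℝ) + ((n : ℝ) - (m : ℝ) - 1) / ((n : ℝ) * ((m : ℝ) + 1)) * L 2 +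
        ∑ j ∈ Finset.Icc 1 m, L (if Odd j then 2 * j + 1 else 2 * j) /
          (((m - j + 1) * (m - j + 2) : ℕ) : ℝ))
    (hcond2 : 0 ≤ 1 / (n : ℝ) + ((n : ℝ) - (m : ℝ)) / ((n : ℝ) * (m : ℝ)) * L 2 +
        ∑ j ∈ Finset.Icc 1 (m - 1), L (if Odd j then 2 * j + 3 else 2 * j + 2) /
          (((m - j) * (m - j + 1) : ℕ) : ℝ)) :
    ∃ D : Matrix (Fin n) (Fin n) ℝ, D.IsSymm ∧ DoublyStochastic D ∧
      D.charpoly = (X - C 1) * ∏ j ∈ Finset.Icc 2 n, (X - C (L j)) := by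
  have hm2 : 2 ≤ m := by omega
  have hme : m % 2 = 0 := by omega
  have hnm : n = 2*m+1 := by omega
  subst hnm
  have e1 : ((2*m+1 : ℕ) : ℝ) = 2*(m:ℝ)+1 := by push_cast; ring
  rw [e1] at hcond1 hcond2
  -- translate hcond1
  have hsum1 : ∑ j ∈ Finset.Icc 1 m, L (if Odd j then 2 * j + 1 else 2 * j) /
        (((m - j + 1) * (m - j + 2) : ℕ) : ℝ)
      = ∑ t ∈ Finset.Icc 1 m, L (Aidx (m+1-t)) / ((t:ℝ)*((t:ℝ)+1)) := by
    refine Finset.sum_nbij' (fun j => m+1-j) (fun t => m+1-t) ?_ ?_ ?_ ?_ ?_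
    · intro a ha; have := Finset.mem_Icc.mp ha; simp only [Finset.mem_Icc]; omega
    · intro a ha; have := Finset.mem_Icc.mp ha; simp only [Finset.mem_Icc]; omega
    · intro a ha; have := Finset.mem_Icc.mp ha; show m+1-(m+1-a) = a; omega
    · intro a ha; have := Finset.mem_Icc.mp ha; show m+1-(m+1-a) = a; omega
    · intro j hj
      have hj' := Finset.mem_Icc.mp hj
      have h1 : (if Odd j then 2*j+1 else 2*j) = Aidx j := by
        simp only [Aidx, Nat.odd_iff]
      have h2 : Aidx (m+1-(m+1-j)) = Aidx j := by congr 1; omega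
      rw [h1, h2]
      have h3 : ((m-j+1)*(m-j+2) : ℕ) = (m+1-j)*((m+1-j)+1) := by
        rw [show m-j+1 = m+1-j from by omega, show m-j+2 = (m+1-j)+1 from by omega]
      rw [h3]
      push_cast
      ring
  rw [hsum1] at hcond1
  have hsum2 : ∑ j ∈ Finset.Icc 1 (m-1), L (if Odd j then 2 * j + 3 else 2 * j + 2) /
        (((m - j) * (m - j + 1) : ℕ) : ℝ)
      = ∑ t ∈ Finset.Icc 1 (m-1), L (Bidx (m-t)) / ((t:ℝ)*((t:ℝ)+1)) := by
    refine Finset.sum_nbij' (fun j => m-j) (fun t => m-t) ?_ ?_ ?_ ?_ ?_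
    · intro a ha; have := Finset.mem_Icc.mp ha; simp only [Finset.mem_Icc]; omega
    · intro a ha; have := Finset.mem_Icc.mp ha; simp only [Finset.mem_Icc]; omega
    · intro a ha; have := Finset.mem_Icc.mp ha; show m-(m-a) = a; omega
    · intro a ha; have := Finset.mem_Icc.mp ha; show m-(m-a) = a; omega
    · intro j hj
      have hj' := Finset.mem_Icc.mp hj
      have h1 : (if Odd j then 2*j+3 else 2*j+2) = Bidx j := by
        simp only [Bidx, Nat.odd_iff]
      have h2 : Bidx (m-(m-j)) = Bidx j := by congr 1; omega
      rw [h1, h2]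
      have h3 : ((m-j)*(m-j+1) : ℕ) = (m-j)*((m-j)+1) := rfl
      rw [h3]
      push_cast
      ring
  rw [hsum2] at hcond2
  have hanti : ∀ a b, 2 ≤ a → a ≤ b → b ≤ 2*m+1 → L b ≤ L a :=
    anti_of_dec L (2*m+1) hdec
  set E : ℕ → ℝ := fun i => gval L (sig m i) with hE
  have hE0 : E 0 = 1 := by
    show gval L (sig m 0) = 1
    rw [sig, if_pos rfl, gval, if_pos rfl]
  refine ⟨Dmat (2*m+1) m E, Dmat_symm (2*m+1) m E, ⟨?_, ?_, ?_⟩, ?_⟩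
  · -- nonnegativity of entries
    intro a b
    rw [Dmat_entry]
    rcases le_total a.1 b.1 with hab | hab
    · exact entry_nonneg m hm2 L hub hanti hcond1 hcond2 a.1 b.1 hab (by have := b.isLt; omega)
    · have hswap : ∑ i ∈ Finset.range (2*m+1),
          E i / ((Nval m i : ℕ) : ℝ) * (uvec m i a.1 * uvec m i b.1)
          = ∑ i ∈ Finset.range (2*m+1),
            E i / ((Nval m i : ℕ) : ℝ) * (uvec m i b.1 * uvec m i a.1) :=
        Finset.sum_congr rfl fun i _ => by ring
      rw [hswap]
      exact entry_nonneg m hm2 L hub hanti hcond1 hcond2 b.1 a.1 hab (by have := a.isLt; omega)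
  · -- row sums
    intro a
    exact Dmat_rowsum (2*m+1) m E hm2 rfl hE0 a
  · -- column sums
    intro b
    have hsym := Dmat_symm (2*m+1) m E
    have hswap : ∀ a : Fin (2*m+1), Dmat (2*m+1) m E a b = Dmat (2*m+1) m E b a := by
      intro a
      conv_lhs => rw [← hsym]
      rfl
    rw [Finset.sum_congr rfl fun a _ => hswap a]
    exact Dmat_rowsum (2*m+1) m E hm2 rfl hE0 b
  · -- characteristic polynomial
    rw [Dmat_charpoly (2*m+1) m E hm2 rfl]
    have hins : Finset.Icc 1 (2*m+1) = insert 1 (Finset.Icc 2 (2*m+1)) := by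
      ext z
      simp only [Finset.mem_Icc, Finset.mem_insert]
      omega
    have hnotmem : (1:ℕ) ∉ Finset.Icc 2 (2*m+1) := by
      simp only [Finset.mem_Icc]
      omega
    have hRHS : (X - C (1:ℝ)) * ∏ j ∈ Finset.Icc 2 (2*m+1), (X - C (L j))
        = ∏ j ∈ Finset.Icc 1 (2*m+1), (X - C (gval L j)) := by
      rw [hins, Finset.prod_insert hnotmem]
      have hg1 : gval L 1 = (1:ℝ) := if_pos rfl
      rw [hg1]
      exact congrArg (fun z => (X - C (1:ℝ)) * z) (Finset.prod_congr rfl fun j hj => by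
        have := Finset.mem_Icc.mp hj
        have hgj : gval L j = L j := if_neg (by omega)
        rw [hgj])
    have hLHS : ∏ i : Fin (2*m+1), (X - C (E i.1))
        = ∏ j ∈ Finset.Icc 1 (2*m+1), (X - C (gval L j)) := by
      rw [Fin.prod_univ_eq_prod_range (fun i => X - C (E i)) (2*m+1)]
      refine Finset.prod_nbij' (sig m) (tau m) ?_ ?_ ?_ ?_ ?_
      · intro a ha
        have ha' := Finset.mem_range.mp ha
        have := sig_mem m a hme hm2 ha'
        simp only [Finset.mem_Icc]
        omega
      · intro a ha
        have ha' := Finset.mem_Icc.mp ha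
        exact Finset.mem_range.mpr (tau_mem m a hme hm2 ha'.1 ha'.2)
      · intro a ha
        exact tau_sig m a hme hm2 (Finset.mem_range.mp ha)
      · intro a ha
        have ha' := Finset.mem_Icc.mp ha
        exact sig_tau m a hme hm2 ha'.1 ha'.2
      · intro a _
        rfl
    rw [hLHS, hRHS]
end

section
/- Let k ≥ 1, n = 4k+3, m = 2k+1, and let 1 ≥ λ₂ ≥ ... ≥ λₙ ≥ −1 be real numbers with 1 + λ₂ + ... + λₙ ≥ 0. Let α₁ < α₂ < ... < α_m be the increasing enumeration of the set {j : 3 ≤ j ≤ n, j ≡ 0 or 3 (mod 4)} (namely 3, 4, 7, 8, ..., n−4, n−3, n), and let β₁ < ... < β_{m−1} be the increasing enumeration of {j : 5 ≤ j ≤ n−1, j ≡ 1 or 2 (mod 4)} (namely 5, 6, 9, 10, ..., n−2, n−1). If both 1/n + ((n−m−1)/(n(m+1)))·λ₂ + Σ_{j=1}^{m} λ_{α_j}/((m−j+1)(m−j+2)) ≥ 0 and 1/n + ((n−m)/(n·m))·λ₂ + Σ_{j=1}^{m−1} λ_{β_j}/((m−j)(m−j+1)) ≥ 0 hold, then there exists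 an n×n symmetric doubly stochastic matrix whose eigenvalues, counted with algebraic multiplicity, are 1, λ₂, ..., λₙ. -/
open Matrix Polynomial

set_option maxHeartbeats 1000000

namespace SDIEPaux

/-- unnormalized Soules chain vector: offset `o`, start `a` (within block), gap `g`. -/
def chain (o a g b : ℕ) : ℝ :=
  (if b ∈ Finset.Ioo (o+a) (o+a+g+1) then 1 else 0) - (if b = o+a then (g:ℝ) else 0)

def alf (j : ℕ) : ℕ := if Odd j then 2*j+1 else 2*j
def bet (j : ℕ) : ℕ := if Odd j then 2*j+3 else 2*j+2

def row (m t b : ℕ) : ℝ :=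
  if t = 0 then 1
  else if t = 1 then (if b ≤ m then (m:ℝ) else -((m:ℝ)+1))
  else if t ≤ m+1 then chain 0 (t-2) (m+2-t) b
  else chain (m+1) (t-m-2) (2*m+1-t) b

def cnorm (m t : ℕ) : ℝ :=
  if t = 0 then ((2*m+1 : ℕ) : ℝ)
  else if t = 1 then ((m*(m+1)*(2*m+1) : ℕ) : ℝ)
  else if t ≤ m+1 then (((m+2-t)*(m+3-t) : ℕ) : ℝ)
  else (((2*m+1-t)*(2*m+2-t) : ℕ) : ℝ)

def eig (m : ℕ) (L : ℕ → ℝ) (t : ℕ) : ℝ :=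
  if t = 0 then 1
  else if t = 1 then L 2
  else if t ≤ m+1 then L (alf (t-1))
  else L (bet (t-m-1))

noncomputable def ent (m : ℕ) (L : ℕ → ℝ) (a b : ℕ) : ℝ :=
  ∑ t ∈ Finset.range (2*m+1), eig m L t / cnorm m t * row m t a * row m t b

noncomputable def GG (h : ℕ → ℝ) (R : ℕ) : ℝ := ∑ r ∈ Finset.range R, h r / (((r+1)*(r+2) : ℕ) : ℝ)

def hA (m : ℕ) (L : ℕ → ℝ) (r : ℕ) : ℝ := eig m L (m+1-r)
def hB (m : ℕ) (L : ℕ → ℝ) (r : ℕ) : ℝ := eig m L (2*m-r)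

/- chain pointwise lemmas -/
lemma chain_eq_one {o a g b : ℕ} (h1 : o+a < b) (h2 : b < o+a+g+1) : chain o a g b = 1 := by
  unfold chain
  rw [if_pos (Finset.mem_Ioo.mpr ⟨h1, h2⟩), if_neg (by omega)]
  ring

lemma chain_eq_neg {o a g : ℕ} : chain o a g (o+a) = -(g:ℝ) := by
  unfold chain
  rw [if_neg (by simp [Finset.mem_Ioo]), if_pos rfl]
  ring

lemma chain_eq_zero_lt {o a g b : ℕ} (h : b < o+a) : chain o a g b = 0 := by
  unfold chain
  rw [if_neg (by simp [Finset.mem_Ioo]; omega), if_neg (by omega)]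
  ring

lemma chain_eq_zero_gt {o a g b : ℕ} (h : o+a+g+1 ≤ b) : chain o a g b = 0 := by
  unfold chain
  rw [if_neg (by simp [Finset.mem_Ioo]; omega), if_neg (by omega)]
  ring

lemma chain_support {o a g b : ℕ} (h : chain o a g b ≠ 0) : o+a ≤ b ∧ b ≤ o+a+g := by
  by_contra hc
  push_neg at hc
  rcases Nat.lt_or_ge b (o+a) with h1 | h1
  · exact h (chain_eq_zero_lt h1)
  · exact h (chain_eq_zero_gt (by omega))

lemma chain_sum {n o a g : ℕ} (h : o+a+g+1 ≤ n) :
    ∑ b ∈ Finset.range n, chain o a g b = 0 := by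
  unfold chain
  rw [Finset.sum_sub_distrib]
  rw [Finset.sum_ite_mem, Finset.sum_ite_eq' (Finset.range n) (o+a) (fun _ => (g:ℝ))]
  have h1 : Finset.range n ∩ Finset.Ioo (o+a) (o+a+g+1) = Finset.Ioo (o+a) (o+a+g+1) := by
    apply Finset.inter_eq_right.mpr
    intro x hx
    simp only [Finset.mem_Ioo] at hx
    simp only [Finset.mem_range]
    omega
  rw [h1]
  have h2 : (o+a) ∈ Finset.range n := by simp; omega
  simp [h2, Nat.card_Ioo]
  have : o + a + g + 1 - (o + a) = g + 1 := by omega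
  rw [this]
  push_cast
  ring

lemma chain_sq_sum {n o a g : ℕ} (h : o+a+g+1 ≤ n) :
    ∑ b ∈ Finset.range n, chain o a g b * chain o a g b = ((g*(g+1) : ℕ) : ℝ) := by
  have key : ∀ b, chain o a g b * chain o a g b =
      (if b ∈ Finset.Ioo (o+a) (o+a+g+1) then 1 else 0)
      + (if b = o+a then ((g:ℝ)*g) else 0) := by
    intro b
    rcases Nat.lt_trichotomy b (o+a) with h1 | h1 | h1
    · rw [chain_eq_zero_lt h1, if_neg (by simp [Finset.mem_Ioo]; omega), if_neg (by omega)]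
      ring
    · subst h1
      rw [chain_eq_neg, if_neg (by simp [Finset.mem_Ioo]), if_pos rfl]
      ring
    · rcases Nat.lt_or_ge b (o+a+g+1) with h2 | h2
      · rw [chain_eq_one h1 h2, if_pos (Finset.mem_Ioo.mpr ⟨h1, h2⟩), if_neg (by omega)]
        ring
      · rw [chain_eq_zero_gt h2, if_neg (by simp [Finset.mem_Ioo]; omega), if_neg (by omega)]
        ring
  rw [Finset.sum_congr rfl (fun b _ => key b)]
  rw [Finset.sum_add_distrib, Finset.sum_ite_mem,
    Finset.sum_ite_eq' (Finset.range n) (o+a) (fun _ => ((g:ℝ)*g))]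
  have h1 : Finset.range n ∩ Finset.Ioo (o+a) (o+a+g+1) = Finset.Ioo (o+a) (o+a+g+1) := by
    apply Finset.inter_eq_right.mpr
    intro x hx
    simp only [Finset.mem_Ioo] at hx
    simp only [Finset.mem_range]
    omega
  rw [h1]
  have h2 : (o+a) ∈ Finset.range n := by simp; omega
  simp [h2, Nat.card_Ioo]
  have : o + a + g + 1 - (o + a) = g + 1 := by omega
  rw [this]
  push_cast
  ring



lemma aux_sum_mul_const {s : Finset ℕ} {f g : ℕ → ℝ} {c : ℝ}
    (h : ∀ b ∈ s, g b ≠ 0 → f b = c) : ∑ b ∈ s, f b * g b = c * ∑ b ∈ s, g b := by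
  rw [Finset.mul_sum]
  refine Finset.sum_congr rfl fun b hb => ?_
  by_cases hg : g b = 0
  · simp [hg]
  · rw [h b hb hg]

lemma row_zero (m b : ℕ) : row m 0 b = 1 := by simp [row]

lemma row_one (m b : ℕ) : row m 1 b = if b ≤ m then (m:ℝ) else -((m:ℝ)+1) := by simp [row]

lemma row_A {m t : ℕ} (h2 : 2 ≤ t) (h3 : t ≤ m+1) (b : ℕ) :
    row m t b = chain 0 (t-2) (m+2-t) b := by
  unfold row
  rw [if_neg (by omega), if_neg (by omega), if_pos h3]

lemma row_B {m t : ℕ} (h2 : m+2 ≤ t) (b : ℕ) :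
    row m t b = chain (m+1) (t-m-2) (2*m+1-t) b := by
  unfold row
  rw [if_neg (by omega), if_neg (by omega), if_neg (by omega)]

lemma row_A_support {m t b : ℕ} (h2 : 2 ≤ t) (h3 : t ≤ m+1) (h : row m t b ≠ 0) :
    t-2 ≤ b ∧ b ≤ m := by
  rw [row_A h2 h3] at h
  have := chain_support h
  omega

lemma row_B_support {m t b : ℕ} (h2 : m+2 ≤ t) (h3 : t ≤ 2*m) (h : row m t b ≠ 0) :
    t-1 ≤ b ∧ b ≤ 2*m := by
  rw [row_B h2] at h
  have := chain_support h
  omega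

lemma row0_sum (m : ℕ) : ∑ b ∈ Finset.range (2*m+1), row m 0 b = ((2*m+1 : ℕ) : ℝ) := by
  simp [row_zero]

lemma row1_sum (m : ℕ) : ∑ b ∈ Finset.range (2*m+1), row m 1 b = 0 := by
  simp only [row_one]
  rw [Finset.range_eq_Ico, ← Finset.sum_Ico_consecutive _ (Nat.zero_le (m+1)) (by omega : m+1 ≤ 2*m+1)]
  rw [Finset.sum_congr rfl (fun b hb => if_pos (by simp at hb; omega)),
      Finset.sum_congr rfl (fun b hb => if_neg (by simp [Finset.mem_Ico] at hb; omega))]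
  rw [Finset.sum_const, Finset.sum_const, Nat.card_Ico, Nat.card_Ico]
  have e1 : m+1-0 = m+1 := by omega
  have e2 : 2*m+1-(m+1) = m := by omega
  rw [e1, e2]
  push_cast
  ring

lemma row1_sq_sum (m : ℕ) : ∑ b ∈ Finset.range (2*m+1), row m 1 b * row m 1 b
    = ((m*(m+1)*(2*m+1) : ℕ) : ℝ) := by
  have key : ∀ b, row m 1 b * row m 1 b
      = if b ≤ m then (m:ℝ)*(m:ℝ) else ((m:ℝ)+1)*((m:ℝ)+1) := by
    intro b
    rw [row_one]
    split_ifs <;> ring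
  rw [Finset.sum_congr rfl (fun b _ => key b)]
  rw [Finset.range_eq_Ico, ← Finset.sum_Ico_consecutive _ (Nat.zero_le (m+1)) (by omega : m+1 ≤ 2*m+1)]
  rw [Finset.sum_congr rfl (fun b hb => if_pos (by simp at hb; omega)),
      Finset.sum_congr rfl (fun b hb => if_neg (by simp [Finset.mem_Ico] at hb; omega))]
  rw [Finset.sum_const, Finset.sum_const, Nat.card_Ico, Nat.card_Ico]
  have e1 : m+1-0 = m+1 := by omega
  have e2 : 2*m+1-(m+1) = m := by omega
  rw [e1, e2]
  push_cast
  ring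

lemma row_sum_zero {m t : ℕ} (h1 : 1 ≤ t) (h2 : t < 2*m+1) :
    ∑ b ∈ Finset.range (2*m+1), row m t b = 0 := by
  rcases Nat.lt_or_ge t 2 with h | h
  · have : t = 1 := by omega
    subst this
    exact row1_sum m
  rcases Nat.lt_or_ge t (m+2) with h3 | h3
  · rw [Finset.sum_congr rfl (fun b _ => row_A h (by omega) b)]
    exact chain_sum (by omega)
  · rw [Finset.sum_congr rfl (fun b _ => row_B h3 b)]
    exact chain_sum (by omega)

lemma cnorm_A {m t : ℕ} (h2 : 2 ≤ t) (h3 : t ≤ m+1) :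
    cnorm m t = (((m+2-t)*(m+3-t) : ℕ) : ℝ) := by
  unfold cnorm
  rw [if_neg (by omega), if_neg (by omega), if_pos h3]

lemma cnorm_B {m t : ℕ} (h2 : m+2 ≤ t) :
    cnorm m t = (((2*m+1-t)*(2*m+2-t) : ℕ) : ℝ) := by
  unfold cnorm
  rw [if_neg (by omega), if_neg (by omega), if_neg (by omega)]

lemma row_dot_lt {m t s : ℕ} (hts : t < s) (hs : s < 2*m+1) :
    ∑ b ∈ Finset.range (2*m+1), row m t b * row m s b = 0 := by
  rcases Nat.eq_zero_or_pos t with ht0 | ht0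
  · subst ht0
    rw [Finset.sum_congr rfl (fun b _ => by rw [row_zero, one_mul])]
    exact row_sum_zero (by omega) hs
  rcases Nat.lt_or_ge t 2 with ht1 | ht2
  · have ht : t = 1 := by omega
    subst ht
    rcases Nat.lt_or_ge s (m+2) with hsm | hsm
    · rw [aux_sum_mul_const (c := (m:ℝ)) (fun b _ hb => by
        rw [row_one]
        exact if_pos (row_A_support (by omega) (by omega) hb).2)]
      rw [row_sum_zero (by omega) hs, mul_zero]
    · rw [aux_sum_mul_const (c := -((m:ℝ)+1)) (fun b _ hb => by
        rw [row_one]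
        exact if_neg (by have := (row_B_support hsm (by omega) hb).1; omega))]
      rw [row_sum_zero (by omega) hs, mul_zero]
  rcases Nat.lt_or_ge t (m+2) with htm | htm
  · rcases Nat.lt_or_ge s (m+2) with hsm | hsm
    · -- both A rows
      rw [aux_sum_mul_const (c := (1:ℝ)) (fun b _ hb => by
        have hsup := row_A_support (by omega : 2 ≤ s) (by omega) hb
        rw [row_A ht2 (by omega)]
        exact chain_eq_one (by omega) (by omega))]
      rw [row_sum_zero (by omega) hs, mul_zero]
    · -- t in A, s in B : disjoint supports
      rw [aux_sum_mul_const (c := (0:ℝ)) (fun b _ hb => by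
        have hsup := row_B_support hsm (by omega) hb
        rw [row_A ht2 (by omega)]
        exact chain_eq_zero_gt (by omega))]
      rw [zero_mul]
  · -- both B rows
    rw [aux_sum_mul_const (c := (1:ℝ)) (fun b _ hb => by
      have hsup := row_B_support (by omega : m+2 ≤ s) (by omega) hb
      rw [row_B htm]
      exact chain_eq_one (by omega) (by omega))]
    rw [row_sum_zero (by omega) hs, mul_zero]



lemma row_dot {m : ℕ} (t s : ℕ) (ht : t < 2*m+1) (hs : s < 2*m+1) :
    ∑ b ∈ Finset.range (2*m+1), row m t b * row m s b
    = if t = s then cnorm m t else 0 := by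
  rcases Nat.lt_trichotomy t s with h | h | h
  · rw [if_neg (by omega)]
    exact row_dot_lt h hs
  · subst h
    rw [if_pos rfl]
    rcases Nat.eq_zero_or_pos t with h0 | h0
    · subst h0
      simp [row_zero, cnorm]
    rcases Nat.lt_or_ge t 2 with h1 | h1
    · have : t = 1 := by omega
      subst this
      rw [row1_sq_sum]
      simp [cnorm]
    rcases Nat.lt_or_ge t (m+2) with h2 | h2
    · rw [Finset.sum_congr rfl (fun b _ => by rw [row_A h1 (by omega)]),
        chain_sq_sum (by omega), cnorm_A h1 (by omega)]
      have : m+2-t+1 = m+3-t := by omega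
      rw [this]
    · rw [Finset.sum_congr rfl (fun b _ => by rw [row_B h2]),
        chain_sq_sum (by omega), cnorm_B h2]
      have : 2*m+1-t+1 = 2*m+2-t := by omega
      rw [this]
  · rw [if_neg (by omega)]
    rw [Finset.sum_congr rfl (fun b _ => mul_comm _ _)]
    exact row_dot_lt h ht

lemma cnorm_pos {m t : ℕ} (hm : 1 ≤ m) (ht : t < 2*m+1) : 0 < cnorm m t := by
  unfold cnorm
  split_ifs with h0 h1 h2
  · have : (0:ℕ) < 2*m+1 := by omega
    exact_mod_cast this
  · have : (0:ℕ) < m*(m+1)*(2*m+1) := by positivity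
    exact_mod_cast this
  · have : (0:ℕ) < (m+2-t)*(m+3-t) := by
      have : 1 ≤ m+2-t := by omega
      have : 1 ≤ m+3-t := by omega
      positivity
    exact_mod_cast this
  · have : (0:ℕ) < (2*m+1-t)*(2*m+2-t) := by
      have h3 : 1 ≤ 2*m+1-t := by omega
      have h4 : 1 ≤ 2*m+2-t := by omega
      positivity
    exact_mod_cast this

lemma ent_symm (m : ℕ) (L : ℕ → ℝ) (a b : ℕ) : ent m L a b = ent m L b a := by
  unfold ent
  exact Finset.sum_congr rfl fun t _ => by ring

lemma ent_row_sum {m : ℕ} (L : ℕ → ℝ) (hm : 1 ≤ m) {a : ℕ} (ha : a < 2*m+1) :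
    ∑ b ∈ Finset.range (2*m+1), ent m L a b = 1 := by
  unfold ent
  rw [Finset.sum_comm]
  have key : ∀ t ∈ Finset.range (2*m+1),
      ∑ b ∈ Finset.range (2*m+1), eig m L t / cnorm m t * row m t a * row m t b
      = if t = 0 then 1 else 0 := by
    intro t htr
    simp only [Finset.mem_range] at htr
    rw [← Finset.mul_sum]
    by_cases h0 : t = 0
    · subst h0
      rw [if_pos rfl, row0_sum, row_zero]
      have hn : ((2*m+1 : ℕ) : ℝ) ≠ 0 := by positivity
      simp [eig, cnorm]
      rw [inv_mul_cancel₀ (by push_cast at hn ⊢; exact hn)]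
    · rw [if_neg h0, row_sum_zero (by omega) htr, mul_zero]
  rw [Finset.sum_congr rfl key, Finset.sum_ite_eq' (Finset.range (2*m+1)) 0 (fun _ => (1:ℝ))]
  simp

lemma dot_ent {m : ℕ} (L : ℕ → ℝ) (hm : 1 ≤ m) {t j : ℕ} (ht : t < 2*m+1) (hj : j < 2*m+1) :
    ∑ b ∈ Finset.range (2*m+1), row m t b * ent m L b j
    = eig m L t * row m t j := by
  unfold ent
  have step1 : ∀ b, row m t b *
      (∑ s ∈ Finset.range (2*m+1), eig m L s / cnorm m s * row m s b * row m s j)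
      = ∑ s ∈ Finset.range (2*m+1),
        (eig m L s / cnorm m s * row m s j) * (row m t b * row m s b) := by
    intro b
    rw [Finset.mul_sum]
    exact Finset.sum_congr rfl fun s _ => by ring
  rw [Finset.sum_congr rfl (fun b _ => step1 b), Finset.sum_comm]
  have step2 : ∀ s ∈ Finset.range (2*m+1),
      ∑ b ∈ Finset.range (2*m+1),
        (eig m L s / cnorm m s * row m s j) * (row m t b * row m s b)
      = if s = t then eig m L t * row m t j else 0 := by
    intro s hsr
    simp only [Finset.mem_range] at hsr
    rw [← Finset.mul_sum, row_dot t s ht hsr]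
    by_cases hst : s = t
    · subst hst
      rw [if_pos rfl, if_pos rfl]
      have hc : cnorm m s ≠ 0 := ne_of_gt (cnorm_pos hm hsr)
      field_simp
    · rw [if_neg (fun h => hst h.symm), if_neg hst, mul_zero]
  rw [Finset.sum_congr rfl step2, Finset.sum_ite_eq' (Finset.range (2*m+1)) t]
  rw [if_pos (by simp; omega)]

lemma sum_split {m : ℕ} (hm : 1 ≤ m) (f : ℕ → ℝ) :
    ∑ t ∈ Finset.range (2*m+1), f t
    = f 0 + f 1 + (∑ t ∈ Finset.Ico 2 (m+2), f t) + ∑ t ∈ Finset.Ico (m+2) (2*m+1), f t := by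
  rw [Finset.range_eq_Ico,
    ← Finset.sum_Ico_consecutive f (by omega : (0:ℕ) ≤ 2) (by omega : 2 ≤ 2*m+1),
    ← Finset.sum_Ico_consecutive f (by omega : (2:ℕ) ≤ m+2) (by omega : m+2 ≤ 2*m+1)]
  have : ∑ t ∈ Finset.Ico 0 2, f t = f 0 + f 1 := by
    rw [show (2:ℕ) = 0 + 2 by rfl]
    rw [Finset.sum_Ico_eq_sum_range]
    simp [Finset.sum_range_succ]
  rw [this]
  ring

lemma reindex_Ico (c len : ℕ) (F : ℕ → ℝ) :
    ∑ t ∈ Finset.Ico c (c+len), F t = ∑ r ∈ Finset.range len, F (c+len-1-r) := by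
  rw [Finset.sum_Ico_eq_sum_range]
  have h1 : c + len - c = len := by omega
  rw [h1]
  rw [← Finset.sum_range_reflect]
  exact Finset.sum_congr rfl fun r hr => by
    simp only [Finset.mem_range] at hr
    congr 1
    omega

lemma GG_sub (h : ℕ → ℝ) {R M : ℕ} (hRM : R ≤ M) :
    GG h M - GG h R = ∑ r ∈ Finset.Ico R M, h r / (((r+1)*(r+2) : ℕ) : ℝ) := by
  rw [Finset.sum_Ico_eq_sub _ hRM]
  rfl

lemma tele (R : ℕ) : ∑ r ∈ Finset.range R, (1:ℝ)/(((r+1)*(r+2) : ℕ) : ℝ)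
    = 1 - 1/((R:ℝ)+1) := by
  induction R with
  | zero => simp
  | succ R ih =>
    rw [Finset.sum_range_succ, ih]
    have h1 : ((R:ℝ)+1) ≠ 0 := by positivity
    have h2 : ((R:ℝ)+2) ≠ 0 := by positivity
    push_cast
    field_simp
    ring



lemma dpos (r : ℕ) : (0:ℝ) < (((r+1)*(r+2) : ℕ) : ℝ) := by
  have : (0:ℕ) < (r+1)*(r+2) := by positivity
  exact_mod_cast this

lemma GG_upper (h : ℕ → ℝ) (S : ℕ) (hmono : ∀ i, i ≤ S → h i ≤ h S) :
    GG h (S+1) ≤ h S * (1 - 1/((S:ℝ)+2)) := by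
  have step : GG h (S+1) ≤ ∑ r ∈ Finset.range (S+1), h S * (1/(((r+1)*(r+2) : ℕ) : ℝ)) := by
    unfold GG
    apply Finset.sum_le_sum
    intro r hr
    simp only [Finset.mem_range] at hr
    rw [div_eq_mul_one_div]
    apply mul_le_mul_of_nonneg_right (hmono r (by omega))
    positivity
  rw [← Finset.mul_sum, tele (S+1)] at step
  have : ((S+1:ℕ):ℝ) + 1 = (S:ℝ)+2 := by push_cast; ring
  rw [this] at step
  exact step

lemma GG_lower (h : ℕ → ℝ) (R M : ℕ) (hR : 1 ≤ R) (hRM : R ≤ M)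
    (hmono : ∀ i, R-1 ≤ i → i < M → h (R-1) ≤ h i) :
    h (R-1) * (1/((R:ℝ)+1) - 1/((M:ℝ)+1)) ≤ GG h M - GG h R := by
  rw [GG_sub h hRM]
  have step : ∑ r ∈ Finset.Ico R M, h (R-1) / (((r+1)*(r+2) : ℕ) : ℝ)
      ≤ ∑ r ∈ Finset.Ico R M, h r / (((r+1)*(r+2) : ℕ) : ℝ) := by
    apply Finset.sum_le_sum
    intro r hr
    simp only [Finset.mem_Ico] at hr
    have hd := dpos r
    gcongr
    exact hmono r (by omega) hr.2
  refine le_trans (le_of_eq ?_) step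
  rw [Finset.sum_congr rfl (fun r _ => by
    rw [div_eq_mul_one_div] :
    ∀ r ∈ Finset.Ico R M, h (R-1) / (((r+1)*(r+2) : ℕ) : ℝ)
      = h (R-1) * (1/(((r+1)*(r+2) : ℕ) : ℝ)))]
  rw [← Finset.mul_sum]
  congr 1
  have e : ∑ r ∈ Finset.Ico R M, (1:ℝ)/(((r+1)*(r+2) : ℕ) : ℝ)
      = (1 - 1/((M:ℝ)+1)) - (1 - 1/((R:ℝ)+1)) := by
    rw [Finset.sum_Ico_eq_sub _ hRM, tele, tele]
  rw [e]
  ring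

lemma core (h : ℕ → ℝ) (M R : ℕ) (c L2 base : ℝ)
    (hR : 1 ≤ R) (hRM : R ≤ M)
    (hmono : ∀ i j, i ≤ j → j < M → h i ≤ h j)
    (hle : h (R-1) ≤ L2)
    (hc1 : -(1:ℝ)/((R:ℝ)+1) ≤ c) (hc2 : c ≤ (R:ℝ)/((R:ℝ)+1))
    (hcond : 0 ≤ base + GG h M)
    (hbase : L2/((M:ℝ)+1) ≤ base) :
    0 ≤ base + (GG h M - GG h R) + c * h (R-1) := by
  have hRpos : (0:ℝ) < (R:ℝ)+1 := by positivity
  rcases le_or_gt (h (R-1)) 0 with hneg | hpos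
  · -- nonpositive pivot: entry dominates the corner entry
    have hup : GG h R ≤ h (R-1) * (1 - 1/(((R-1:ℕ):ℝ)+2)) := by
      have := GG_upper h (R-1) (fun i hi => by
        rcases Nat.eq_or_lt_of_le hi with h1 | h1
        · rw [h1]
        · exact hmono i (R-1) hi (by omega))
      have hRe : R - 1 + 1 = R := by omega
      rwa [hRe] at this
    have hcast : ((R-1:ℕ):ℝ) = (R:ℝ) - 1 := by
      rw [Nat.cast_sub hR, Nat.cast_one]
    rw [hcast] at hup
    have e1 : (R:ℝ) - 1 + 2 = (R:ℝ)+1 := by ring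
    rw [e1] at hup
    have e2 : h (R-1) * (1 - 1/((R:ℝ)+1)) = ((R:ℝ)/((R:ℝ)+1)) * h (R-1) := by
      field_simp
      ring
    rw [e2] at hup
    have hch : ((R:ℝ)/((R:ℝ)+1)) * h (R-1) ≤ c * h (R-1) :=
      mul_le_mul_of_nonpos_right hc2 hneg
    linarith
  · have hlow := GG_lower h R M hR hRM (fun i hi him => by
      rcases Nat.eq_or_lt_of_le hi with h1 | h1
      · rw [h1]
      · exact hmono (R-1) i hi him)
    have hch : -(1:ℝ)/((R:ℝ)+1) * h (R-1) ≤ c * h (R-1) :=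
      mul_le_mul_of_nonneg_right hc1 (le_of_lt hpos)
    have hM1 : (0:ℝ) < (M:ℝ)+1 := by positivity
    have hdiv : h (R-1)/((M:ℝ)+1) ≤ L2/((M:ℝ)+1) := by gcongr
    have e3 : h (R-1) * (1/((R:ℝ)+1) - 1/((M:ℝ)+1))
        = h (R-1)/((R:ℝ)+1) - h (R-1)/((M:ℝ)+1) := by ring
    have e4 : -(1:ℝ)/((R:ℝ)+1) * h (R-1) = -(h (R-1)/((R:ℝ)+1)) := by ring
    linarith



lemma eig_zero (m : ℕ) (L : ℕ → ℝ) : eig m L 0 = 1 := by simp [eig]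
lemma eig_one (m : ℕ) (L : ℕ → ℝ) : eig m L 1 = L 2 := by simp [eig]

lemma rowA_zero_high {m t x : ℕ} (h2 : 2 ≤ t) (h3 : t ≤ m+1) (hx : m+1 ≤ x) :
    row m t x = 0 := by
  rw [row_A h2 h3]
  exact chain_eq_zero_gt (by omega)

lemma rowB_zero_low {m t x : ℕ} (h2 : m+2 ≤ t) (hx : x ≤ m) : row m t x = 0 := by
  rw [row_B h2]
  exact chain_eq_zero_lt (by omega)

/-- value of an A-row at a point of the A block, t = m+1-r form -/
lemma rowA_val {m r x : ℕ} (hr : r < m) (hx : x ≤ m) :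
    row m (m+1-r) x = if x = m-1-r then -((r:ℝ)+1) else if m-1-r < x then 1 else 0 := by
  rw [row_A (by omega) (by omega)]
  have e1 : m+1-r-2 = m-1-r := by omega
  have e2 : m+2-(m+1-r) = r+1 := by omega
  rw [e1, e2]
  rcases Nat.lt_trichotomy x (m-1-r) with h | h | h
  · rw [chain_eq_zero_lt (by omega), if_neg (by omega), if_neg (by omega)]
  · subst h
    rw [if_pos rfl]
    have := chain_eq_neg (o := 0) (a := m-1-r) (g := r+1)
    simp only [Nat.zero_add] at this
    rw [this]
    push_cast
    ring
  · rw [if_neg (by omega), if_pos h]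
    exact chain_eq_one (by omega) (by omega)

/-- value of a B-row at a point of the B block, t = 2m-r form -/
lemma rowB_val {m r x : ℕ} (hm : 2 ≤ m) (hr : r < m-1) (hx1 : m+1 ≤ x) (hx2 : x ≤ 2*m) :
    row m (2*m-r) x = if x = 2*m-1-r then -((r:ℝ)+1) else if 2*m-1-r < x then 1 else 0 := by
  rw [row_B (by omega)]
  have e1 : 2*m-r-m-2 = m-2-r := by omega
  have e2 : 2*m+1-(2*m-r) = r+1 := by omega
  rw [e1, e2]
  have ebot : m+1+(m-2-r) = 2*m-1-r := by omega
  rcases Nat.lt_trichotomy x (2*m-1-r) with h | h | h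
  · rw [chain_eq_zero_lt (by omega), if_neg (by omega), if_neg (by omega)]
  · subst h
    rw [if_pos rfl]
    have := chain_eq_neg (o := m+1) (a := m-2-r) (g := r+1)
    rw [ebot] at this
    rw [this]
    push_cast
    ring
  · rw [if_neg (by omega), if_pos h]
    exact chain_eq_one (by omega) (by omega)

lemma cnormA_val {m r : ℕ} (hr : r < m) : cnorm m (m+1-r) = (((r+1)*(r+2) : ℕ) : ℝ) := by
  rw [cnorm_A (by omega) (by omega)]
  have e2 : m+2-(m+1-r) = r+1 := by omega
  have e3 : m+3-(m+1-r) = r+2 := by omega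
  rw [e2, e3]

lemma cnormB_val {m r : ℕ} (hm : 2 ≤ m) (hr : r < m-1) :
    cnorm m (2*m-r) = (((r+1)*(r+2) : ℕ) : ℝ) := by
  rw [cnorm_B (by omega)]
  have e2 : 2*m+1-(2*m-r) = r+1 := by omega
  have e3 : 2*m+2-(2*m-r) = r+2 := by omega
  rw [e2, e3]

lemma sumA_vanish {m : ℕ} (L : ℕ → ℝ) {a b : ℕ} (hb : m+1 ≤ b) :
    ∑ t ∈ Finset.Ico 2 (m+2), eig m L t / cnorm m t * row m t a * row m t b = 0 := by
  apply Finset.sum_eq_zero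
  intro t ht
  simp only [Finset.mem_Ico] at ht
  rw [rowA_zero_high ht.1 (by omega) hb, mul_zero]

lemma sumB_vanish {m : ℕ} (L : ℕ → ℝ) {a b : ℕ} (ha : a ≤ m) :
    ∑ t ∈ Finset.Ico (m+2) (2*m+1), eig m L t / cnorm m t * row m t a * row m t b = 0 := by
  apply Finset.sum_eq_zero
  intro t ht
  simp only [Finset.mem_Ico] at ht
  rw [rowB_zero_low ht.1 ha, mul_zero, zero_mul]

lemma sum_ind_GG (h : ℕ → ℝ) {R M : ℕ} (hRM : R ≤ M) :
    ∑ r ∈ Finset.range M, (if R ≤ r then h r / (((r+1)*(r+2) : ℕ) : ℝ) else 0)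
    = GG h M - GG h R := by
  rw [← Finset.sum_filter]
  rw [GG_sub h hRM]
  apply Finset.sum_congr
  · ext x
    simp only [Finset.mem_filter, Finset.mem_range, Finset.mem_Ico]
    omega
  · intros; rfl

lemma entA_off {m : ℕ} (L : ℕ → ℝ) {a b : ℕ} (hab : a < b) (hbm : b ≤ m) :
    ∑ t ∈ Finset.Ico 2 (m+2), eig m L t / cnorm m t * row m t a * row m t b
    = (GG (hA m L) m - GG (hA m L) (m-a))
      - hA m L (m-a-1) / (((m-a-1 : ℕ) : ℝ) + 2) := by
  have hm : 1 ≤ m := by omega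
  have e0 : m+2 = 2+m := by ring
  rw [e0, reindex_Ico 2 m]
  have key : ∀ r ∈ Finset.range m,
      eig m L (2+m-1-r) / cnorm m (2+m-1-r) * row m (2+m-1-r) a * row m (2+m-1-r) b
      = (if m-a ≤ r then hA m L r / (((r+1)*(r+2) : ℕ) : ℝ) else 0)
        + (if r = m-a-1 then -(hA m L r) / (((r:ℕ):ℝ)+2) else 0) := by
    intro r hr
    simp only [Finset.mem_range] at hr
    have eidx : 2+m-1-r = m+1-r := by omega
    rw [eidx, cnormA_val hr, rowA_val hr (by omega), rowA_val hr hbm]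
    have heig : eig m L (m+1-r) = hA m L r := rfl
    rw [heig]
    rcases Nat.lt_trichotomy a (m-1-r) with h | h | h
    · rw [if_neg (show ¬ a = m-1-r by omega), if_neg (show ¬ m-1-r < a by omega),
        if_neg (show ¬ m-a ≤ r by omega), if_neg (show ¬ r = m-a-1 by omega)]
      ring
    · -- a is the pivot
      rw [if_pos (show a = m-1-r from h), if_neg (show ¬ b = m-1-r by omega),
        if_pos (show m-1-r < b by omega), if_neg (show ¬ m-a ≤ r by omega),
        if_pos (show r = m-a-1 by omega)]
      have hd := dpos r
      push_cast at hd ⊢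
      field_simp
      ring
    · rw [if_neg (show ¬ a = m-1-r by omega), if_pos (show m-1-r < a from h),
        if_neg (show ¬ b = m-1-r by omega), if_pos (show m-1-r < b by omega),
        if_pos (show m-a ≤ r by omega), if_neg (show ¬ r = m-a-1 by omega)]
      ring
  rw [Finset.sum_congr rfl key, Finset.sum_add_distrib,
    sum_ind_GG (hA m L) (by omega : m-a ≤ m),
    Finset.sum_ite_eq' (Finset.range m) (m-a-1) (fun r => -(hA m L r) / (((r:ℕ):ℝ)+2))]
  rw [if_pos (by simp only [Finset.mem_range]; omega)]
  ring



lemma entA_diag {m : ℕ} (L : ℕ → ℝ) {a : ℕ} (ham : a < m) :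
    ∑ t ∈ Finset.Ico 2 (m+2), eig m L t / cnorm m t * row m t a * row m t a
    = (GG (hA m L) m - GG (hA m L) (m-a))
      + hA m L (m-a-1) * ((((m-a-1 : ℕ) : ℝ) + 1) / (((m-a-1 : ℕ) : ℝ) + 2)) := by
  have hm : 1 ≤ m := by omega
  have e0 : m+2 = 2+m := by ring
  rw [e0, reindex_Ico 2 m]
  have key : ∀ r ∈ Finset.range m,
      eig m L (2+m-1-r) / cnorm m (2+m-1-r) * row m (2+m-1-r) a * row m (2+m-1-r) a
      = (if m-a ≤ r then hA m L r / (((r+1)*(r+2) : ℕ) : ℝ) else 0)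
        + (if r = m-a-1 then hA m L r * ((((r:ℕ):ℝ)+1) / (((r:ℕ):ℝ)+2)) else 0) := by
    intro r hr
    simp only [Finset.mem_range] at hr
    have eidx : 2+m-1-r = m+1-r := by omega
    rw [eidx, cnormA_val hr, rowA_val hr (by omega)]
    have heig : eig m L (m+1-r) = hA m L r := rfl
    rw [heig]
    rcases Nat.lt_trichotomy a (m-1-r) with h | h | h
    · rw [if_neg (show ¬ a = m-1-r by omega), if_neg (show ¬ m-1-r < a by omega),
        if_neg (show ¬ m-a ≤ r by omega), if_neg (show ¬ r = m-a-1 by omega)]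
      ring
    · rw [if_pos (show a = m-1-r from h),
        if_neg (show ¬ m-a ≤ r by omega), if_pos (show r = m-a-1 by omega)]
      have hd := dpos r
      push_cast at hd ⊢
      field_simp
      ring
    · rw [if_neg (show ¬ a = m-1-r by omega), if_pos (show m-1-r < a from h),
        if_pos (show m-a ≤ r by omega), if_neg (show ¬ r = m-a-1 by omega)]
      ring
  rw [Finset.sum_congr rfl key, Finset.sum_add_distrib,
    sum_ind_GG (hA m L) (by omega : m-a ≤ m),
    Finset.sum_ite_eq' (Finset.range m) (m-a-1)
      (fun r => hA m L r * ((((r:ℕ):ℝ)+1) / (((r:ℕ):ℝ)+2)))]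
  rw [if_pos (by simp only [Finset.mem_range]; omega)]

lemma entA_corner {m : ℕ} (L : ℕ → ℝ) (hm : 1 ≤ m) :
    ∑ t ∈ Finset.Ico 2 (m+2), eig m L t / cnorm m t * row m t m * row m t m
    = GG (hA m L) m := by
  have e0 : m+2 = 2+m := by ring
  rw [e0, reindex_Ico 2 m]
  unfold GG
  apply Finset.sum_congr rfl
  intro r hr
  simp only [Finset.mem_range] at hr
  have eidx : 2+m-1-r = m+1-r := by omega
  rw [eidx, cnormA_val hr, rowA_val hr (le_refl m)]
  have heig : eig m L (m+1-r) = hA m L r := rfl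
  rw [heig, if_neg (show ¬ m = m-1-r by omega), if_pos (show m-1-r < m by omega)]
  ring

lemma entB_off {m : ℕ} (L : ℕ → ℝ) {a b : ℕ} (hm : 2 ≤ m) (ha : m+1 ≤ a) (hab : a < b)
    (hb : b ≤ 2*m) :
    ∑ t ∈ Finset.Ico (m+2) (2*m+1), eig m L t / cnorm m t * row m t a * row m t b
    = (GG (hB m L) (m-1) - GG (hB m L) (2*m-a))
      - hB m L (2*m-a-1) / (((2*m-a-1 : ℕ) : ℝ) + 2) := by
  have e0 : 2*m+1 = (m+2)+(m-1) := by omega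
  rw [e0, reindex_Ico (m+2) (m-1)]
  have key : ∀ r ∈ Finset.range (m-1),
      eig m L (m+2+(m-1)-1-r) / cnorm m (m+2+(m-1)-1-r) * row m (m+2+(m-1)-1-r) a
        * row m (m+2+(m-1)-1-r) b
      = (if 2*m-a ≤ r then hB m L r / (((r+1)*(r+2) : ℕ) : ℝ) else 0)
        + (if r = 2*m-a-1 then -(hB m L r) / (((r:ℕ):ℝ)+2) else 0) := by
    intro r hr
    simp only [Finset.mem_range] at hr
    have eidx : m+2+(m-1)-1-r = 2*m-r := by omega
    rw [eidx, cnormB_val hm hr, rowB_val hm hr ha (by omega), rowB_val hm hr (by omega) hb]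
    have heig : eig m L (2*m-r) = hB m L r := rfl
    rw [heig]
    rcases Nat.lt_trichotomy a (2*m-1-r) with h | h | h
    · rw [if_neg (show ¬ a = 2*m-1-r by omega), if_neg (show ¬ 2*m-1-r < a by omega),
        if_neg (show ¬ 2*m-a ≤ r by omega), if_neg (show ¬ r = 2*m-a-1 by omega)]
      ring
    · rw [if_pos (show a = 2*m-1-r from h), if_neg (show ¬ b = 2*m-1-r by omega),
        if_pos (show 2*m-1-r < b by omega), if_neg (show ¬ 2*m-a ≤ r by omega),
        if_pos (show r = 2*m-a-1 by omega)]
      have hd := dpos r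
      push_cast at hd ⊢
      field_simp
      ring
    · rw [if_neg (show ¬ a = 2*m-1-r by omega), if_pos (show 2*m-1-r < a from h),
        if_neg (show ¬ b = 2*m-1-r by omega), if_pos (show 2*m-1-r < b by omega),
        if_pos (show 2*m-a ≤ r by omega), if_neg (show ¬ r = 2*m-a-1 by omega)]
      ring
  rw [Finset.sum_congr rfl key, Finset.sum_add_distrib,
    sum_ind_GG (hB m L) (by omega : 2*m-a ≤ m-1),
    Finset.sum_ite_eq' (Finset.range (m-1)) (2*m-a-1)
      (fun r => -(hB m L r) / (((r:ℕ):ℝ)+2))]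
  rw [if_pos (by simp only [Finset.mem_range]; omega)]
  ring

lemma entB_diag {m : ℕ} (L : ℕ → ℝ) {a : ℕ} (hm : 2 ≤ m) (ha : m+1 ≤ a) (ha2 : a < 2*m) :
    ∑ t ∈ Finset.Ico (m+2) (2*m+1), eig m L t / cnorm m t * row m t a * row m t a
    = (GG (hB m L) (m-1) - GG (hB m L) (2*m-a))
      + hB m L (2*m-a-1) * ((((2*m-a-1 : ℕ) : ℝ) + 1) / (((2*m-a-1 : ℕ) : ℝ) + 2)) := by
  have e0 : 2*m+1 = (m+2)+(m-1) := by omega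
  rw [e0, reindex_Ico (m+2) (m-1)]
  have key : ∀ r ∈ Finset.range (m-1),
      eig m L (m+2+(m-1)-1-r) / cnorm m (m+2+(m-1)-1-r) * row m (m+2+(m-1)-1-r) a
        * row m (m+2+(m-1)-1-r) a
      = (if 2*m-a ≤ r then hB m L r / (((r+1)*(r+2) : ℕ) : ℝ) else 0)
        + (if r = 2*m-a-1 then hB m L r * ((((r:ℕ):ℝ)+1) / (((r:ℕ):ℝ)+2)) else 0) := by
    intro r hr
    simp only [Finset.mem_range] at hr
    have eidx : m+2+(m-1)-1-r = 2*m-r := by omega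
    rw [eidx, cnormB_val hm hr, rowB_val hm hr ha (by omega)]
    have heig : eig m L (2*m-r) = hB m L r := rfl
    rw [heig]
    rcases Nat.lt_trichotomy a (2*m-1-r) with h | h | h
    · rw [if_neg (show ¬ a = 2*m-1-r by omega), if_neg (show ¬ 2*m-1-r < a by omega),
        if_neg (show ¬ 2*m-a ≤ r by omega), if_neg (show ¬ r = 2*m-a-1 by omega)]
      ring
    · rw [if_pos (show a = 2*m-1-r from h),
        if_neg (show ¬ 2*m-a ≤ r by omega), if_pos (show r = 2*m-a-1 by omega)]
      have hd := dpos r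
      push_cast at hd ⊢
      field_simp
      ring
    · rw [if_neg (show ¬ a = 2*m-1-r by omega), if_pos (show 2*m-1-r < a from h),
        if_pos (show 2*m-a ≤ r by omega), if_neg (show ¬ r = 2*m-a-1 by omega)]
      ring
  rw [Finset.sum_congr rfl key, Finset.sum_add_distrib,
    sum_ind_GG (hB m L) (by omega : 2*m-a ≤ m-1),
    Finset.sum_ite_eq' (Finset.range (m-1)) (2*m-a-1)
      (fun r => hB m L r * ((((r:ℕ):ℝ)+1) / (((r:ℕ):ℝ)+2)))]
  rw [if_pos (by simp only [Finset.mem_range]; omega)]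

lemma entB_corner {m : ℕ} (L : ℕ → ℝ) (hm : 2 ≤ m) :
    ∑ t ∈ Finset.Ico (m+2) (2*m+1), eig m L t / cnorm m t * row m t (2*m) * row m t (2*m)
    = GG (hB m L) (m-1) := by
  have e0 : 2*m+1 = (m+2)+(m-1) := by omega
  rw [e0, reindex_Ico (m+2) (m-1)]
  unfold GG
  apply Finset.sum_congr rfl
  intro r hr
  simp only [Finset.mem_range] at hr
  have eidx : m+2+(m-1)-1-r = 2*m-r := by omega
  rw [eidx, cnormB_val hm hr, rowB_val hm hr (by omega) (le_refl (2*m))]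
  have heig : eig m L (2*m-r) = hB m L r := rfl
  rw [heig, if_neg (show ¬ 2*m = 2*m-1-r by omega), if_pos (show 2*m-1-r < 2*m by omega)]
  ring



lemma alf_ge (j : ℕ) (hj : 1 ≤ j) : 2 ≤ alf j := by
  unfold alf
  split_ifs <;> omega

lemma alf_le {m j : ℕ} (hj : j ≤ m) : alf j ≤ 2*m+1 := by
  unfold alf
  split_ifs <;> omega

lemma alf_mono {i j : ℕ} (hij : i ≤ j) : alf i ≤ alf j := by
  rcases Nat.eq_or_lt_of_le hij with h | h
  · rw [h]
  · unfold alf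
    split_ifs <;> omega

lemma bet_ge (j : ℕ) : 2 ≤ bet j := by
  unfold bet
  split_ifs <;> omega

lemma bet_le {m j : ℕ} (hj : j ≤ m-1) (hm : 1 ≤ m) : bet j ≤ 2*m+1 := by
  unfold bet
  split_ifs <;> omega

lemma bet_mono {i j : ℕ} (hij : i ≤ j) : bet i ≤ bet j := by
  rcases Nat.eq_or_lt_of_le hij with h | h
  · rw [h]
  · unfold bet
    split_ifs <;> omega

lemma eig_A {m t : ℕ} (L : ℕ → ℝ) (h2 : 2 ≤ t) (h3 : t ≤ m+1) :
    eig m L t = L (alf (t-1)) := by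
  unfold eig
  rw [if_neg (by omega), if_neg (by omega), if_pos h3]

lemma eig_B {m t : ℕ} (L : ℕ → ℝ) (h2 : m+2 ≤ t) :
    eig m L t = L (bet (t-m-1)) := by
  unfold eig
  rw [if_neg (by omega), if_neg (by omega), if_neg (by omega)]

section Mono

variable {m : ℕ} {L : ℕ → ℝ}

lemma hA_mono (hmonoL : ∀ i j, 2 ≤ i → i ≤ j → j ≤ 2*m+1 → L j ≤ L i) (hm : 1 ≤ m) : ∀ i j, i ≤ j → j < m → hA m L i ≤ hA m L j := by
  intro i j hij hjm
  unfold hA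
  rw [eig_A L (by omega) (by omega), eig_A L (by omega) (by omega)]
  have e1 : m+1-i-1 = m-i := by omega
  have e2 : m+1-j-1 = m-j := by omega
  rw [e1, e2]
  apply hmonoL _ _ (alf_ge _ (by omega)) (alf_mono (by omega)) (alf_le (by omega))

lemma hA_le_L2 (hmonoL : ∀ i j, 2 ≤ i → i ≤ j → j ≤ 2*m+1 → L j ≤ L i) (hm : 1 ≤ m) {r : ℕ} (hr : r ≤ m-1) : hA m L r ≤ L 2 := by
  unfold hA
  rw [eig_A L (by omega) (by omega)]
  apply hmonoL _ _ (le_refl 2) (alf_ge _ (by omega)) (alf_le (by omega))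

lemma hB_mono (hmonoL : ∀ i j, 2 ≤ i → i ≤ j → j ≤ 2*m+1 → L j ≤ L i) (hm : 2 ≤ m) : ∀ i j, i ≤ j → j < m-1 → hB m L i ≤ hB m L j := by
  intro i j hij hjm
  unfold hB
  rw [eig_B L (by omega), eig_B L (by omega)]
  have e1 : 2*m-i-m-1 = m-1-i := by omega
  have e2 : 2*m-j-m-1 = m-1-j := by omega
  rw [e1, e2]
  apply hmonoL _ _ (bet_ge _) (bet_mono (by omega)) (bet_le (by omega) (by omega))

lemma hB_le_L2 (hmonoL : ∀ i j, 2 ≤ i → i ≤ j → j ≤ 2*m+1 → L j ≤ L i) (hm : 2 ≤ m) {r : ℕ} (hr : r ≤ m-2) : hB m L r ≤ L 2 := by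
  unfold hB
  rw [eig_B L (by omega)]
  apply hmonoL _ _ (le_refl 2) (bet_ge _) (bet_le (by omega) (by omega))

end Mono



lemma ent_nonneg_le {m : ℕ} (L : ℕ → ℝ) (hm : 3 ≤ m)
    (hub : L 2 ≤ 1)
    (hmonoL : ∀ i j, 2 ≤ i → i ≤ j → j ≤ 2*m+1 → L j ≤ L i)
    (hc1 : 0 ≤ 1/(2*(m:ℝ)+1) + (m:ℝ)/(((m:ℝ)+1)*(2*(m:ℝ)+1)) * L 2 + GG (hA m L) m)
    (hc2 : 0 ≤ 1/(2*(m:ℝ)+1) + ((m:ℝ)+1)/((m:ℝ)*(2*(m:ℝ)+1)) * L 2 + GG (hB m L) (m-1))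
    {a b : ℕ} (hab : a ≤ b) (hb : b < 2*m+1) :
    0 ≤ ent m L a b := by
  have hmR : (0:ℝ) < (m:ℝ) := by
    have : (0:ℕ) < m := by omega
    exact_mod_cast this
  have hm1 : (0:ℝ) < (m:ℝ)+1 := by positivity
  have hn : (0:ℝ) < 2*(m:ℝ)+1 := by positivity
  unfold ent
  rw [sum_split (by omega : 1 ≤ m)]
  have p0 : eig m L 0 / cnorm m 0 * row m 0 a * row m 0 b = 1/(2*(m:ℝ)+1) := by
    rw [eig_zero, row_zero, row_zero]
    simp only [cnorm, if_pos rfl]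
    push_cast
    ring
  have cn1 : cnorm m 1 = ((m*(m+1)*(2*m+1) : ℕ) : ℝ) := by simp [cnorm]
  rcases Nat.lt_or_ge b (m+1) with hbm | hbm
  · -- both indices in the A block
    have p1 : eig m L 1 / cnorm m 1 * row m 1 a * row m 1 b
        = (m:ℝ)/(((m:ℝ)+1)*(2*(m:ℝ)+1)) * L 2 := by
      rw [eig_one, cn1, row_one, row_one, if_pos (by omega : a ≤ m), if_pos (by omega : b ≤ m)]
      push_cast
      field_simp
    rw [p0, p1, sumB_vanish L (by omega : a ≤ m)]
    rcases Nat.eq_or_lt_of_le hab with heq | hlt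
    · subst heq
      rcases Nat.eq_or_lt_of_le (show a ≤ m by omega) with ham | ham
      · subst ham
        rw [entA_corner L (by omega)]
        linarith [hc1]
      · rw [entA_diag L ham]
        have ecast : ((m-a-1 : ℕ) : ℝ) + 1 = ((m-a : ℕ) : ℝ) := by
          have h1 : m-a-1+1 = m-a := by omega
          exact_mod_cast congrArg (Nat.cast (R := ℝ)) h1
        have hRpos : (0:ℝ) < ((m-a:ℕ):ℝ) + 1 := by positivity
        have hcore := core (hA m L) m (m-a)
          ((((m-a-1 : ℕ) : ℝ) + 1) / (((m-a-1 : ℕ) : ℝ) + 2))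
          (L 2) (1/(2*(m:ℝ)+1) + (m:ℝ)/(((m:ℝ)+1)*(2*(m:ℝ)+1)) * L 2)
          (by omega) (by omega)
          (hA_mono hmonoL (by omega))
          (hA_le_L2 hmonoL (by omega) (by omega))
          (by
            have h1 : (0:ℝ) ≤ (((m-a-1 : ℕ) : ℝ) + 1) / (((m-a-1 : ℕ) : ℝ) + 2) := by positivity
            have h2 : (0:ℝ) ≤ 1/(((m-a:ℕ):ℝ)+1) := by positivity
            have h3 : -(1:ℝ)/(((m-a:ℕ):ℝ)+1) = -(1/(((m-a:ℕ):ℝ)+1)) := by ring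
            linarith)
          (by
            rw [ecast]
            rw [show (((m-a-1 : ℕ) : ℝ) + 2) = ((m-a:ℕ):ℝ) + 1 by linarith [ecast]])
          hc1
          (by
            have key : 1/(2*(m:ℝ)+1) + (m:ℝ)/(((m:ℝ)+1)*(2*(m:ℝ)+1)) * L 2 - L 2/((m:ℝ)+1)
                = (1 - L 2)/(2*(m:ℝ)+1) := by
              field_simp
              ring
            have pos : 0 ≤ (1 - L 2)/(2*(m:ℝ)+1) := div_nonneg (by linarith) (le_of_lt hn)
            linarith)
        linarith [hcore]
    · rw [entA_off L hlt (by omega)]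
      have ecast : ((m-a-1 : ℕ) : ℝ) + 1 = ((m-a : ℕ) : ℝ) := by
        have h1 : m-a-1+1 = m-a := by omega
        exact_mod_cast congrArg (Nat.cast (R := ℝ)) h1
      have hRpos : (0:ℝ) < ((m-a:ℕ):ℝ) + 1 := by positivity
      have hRR : (0:ℝ) ≤ ((m-a:ℕ):ℝ) := by positivity
      have hcore := core (hA m L) m (m-a)
        (-1/(((m-a:ℕ):ℝ)+1))
        (L 2) (1/(2*(m:ℝ)+1) + (m:ℝ)/(((m:ℝ)+1)*(2*(m:ℝ)+1)) * L 2)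
        (by omega) (by omega)
        (hA_mono hmonoL (by omega))
        (hA_le_L2 hmonoL (by omega) (by omega))
        (le_refl _)
        (by
          have h1 : (0:ℝ) ≤ ((m-a:ℕ):ℝ)/(((m-a:ℕ):ℝ)+1) := by positivity
          have h2 : (0:ℝ) ≤ 1/(((m-a:ℕ):ℝ)+1) := by positivity
          have h3 : -(1:ℝ)/(((m-a:ℕ):ℝ)+1) = -(1/(((m-a:ℕ):ℝ)+1)) := by ring
          linarith)
        hc1
        (by
          have key : 1/(2*(m:ℝ)+1) + (m:ℝ)/(((m:ℝ)+1)*(2*(m:ℝ)+1)) * L 2 - L 2/((m:ℝ)+1)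
              = (1 - L 2)/(2*(m:ℝ)+1) := by
            field_simp
            ring
          have pos : 0 ≤ (1 - L 2)/(2*(m:ℝ)+1) := div_nonneg (by linarith) (le_of_lt hn)
          linarith)
      have eterm : (-1/(((m-a:ℕ):ℝ)+1)) * hA m L (m-a-1)
          = - (hA m L (m-a-1) / (((m-a-1 : ℕ) : ℝ) + 2)) := by
        rw [show (((m-a-1 : ℕ) : ℝ) + 2) = ((m-a:ℕ):ℝ) + 1 by linarith [ecast]]
        ring
      linarith [hcore, eterm]
  · rcases Nat.lt_or_ge a (m+1) with ham | ham
    · -- cross entry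
      have p1 : eig m L 1 / cnorm m 1 * row m 1 a * row m 1 b
          = -(1/(2*(m:ℝ)+1)) * L 2 := by
        rw [eig_one, cn1, row_one, row_one, if_pos (by omega : a ≤ m), if_neg (by omega : ¬ b ≤ m)]
        push_cast
        field_simp
      rw [p0, p1, sumA_vanish L (by omega : m+1 ≤ b), sumB_vanish L (by omega : a ≤ m)]
      have key : 0 ≤ (1 - L 2) * (1/(2*(m:ℝ)+1)) :=
        mul_nonneg (by linarith) (by positivity)
      have expand : (1 - L 2) * (1/(2*(m:ℝ)+1))
          = 1/(2*(m:ℝ)+1) + -(1/(2*(m:ℝ)+1)) * L 2 := by ring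
      linarith
    · -- both indices in the B block
      have p1 : eig m L 1 / cnorm m 1 * row m 1 a * row m 1 b
          = ((m:ℝ)+1)/((m:ℝ)*(2*(m:ℝ)+1)) * L 2 := by
        rw [eig_one, cn1, row_one, row_one, if_neg (by omega : ¬ a ≤ m), if_neg (by omega : ¬ b ≤ m)]
        push_cast
        field_simp
      rw [p0, p1, sumA_vanish L (by omega : m+1 ≤ b)]
      have ecastM : ((m-1:ℕ):ℝ) + 1 = (m:ℝ) := by
        have h1 : m-1+1 = m := by omega
        exact_mod_cast congrArg (Nat.cast (R := ℝ)) h1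
      have hbase : L 2/(((m-1:ℕ):ℝ)+1) ≤ 1/(2*(m:ℝ)+1) + ((m:ℝ)+1)/((m:ℝ)*(2*(m:ℝ)+1)) * L 2 := by
        rw [ecastM]
        have key : 1/(2*(m:ℝ)+1) + ((m:ℝ)+1)/((m:ℝ)*(2*(m:ℝ)+1)) * L 2 - L 2/(m:ℝ)
            = (1 - L 2)/(2*(m:ℝ)+1) := by
          field_simp
          ring
        have pos : 0 ≤ (1 - L 2)/(2*(m:ℝ)+1) := div_nonneg (by linarith) (le_of_lt hn)
        linarith
      rcases Nat.eq_or_lt_of_le hab with heq | hlt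
      · subst heq
        rcases Nat.eq_or_lt_of_le (show a ≤ 2*m by omega) with ham2 | ham2
        · subst ham2
          rw [entB_corner L (by omega)]
          linarith [hc2]
        · rw [entB_diag L (by omega) (by omega) ham2]
          have ecast : ((2*m-a-1 : ℕ) : ℝ) + 1 = ((2*m-a : ℕ) : ℝ) := by
            have h1 : 2*m-a-1+1 = 2*m-a := by omega
            exact_mod_cast congrArg (Nat.cast (R := ℝ)) h1
          have hRpos : (0:ℝ) < ((2*m-a:ℕ):ℝ) + 1 := by positivity
          have hcore := core (hB m L) (m-1) (2*m-a)
            ((((2*m-a-1 : ℕ) : ℝ) + 1) / (((2*m-a-1 : ℕ) : ℝ) + 2))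
            (L 2) (1/(2*(m:ℝ)+1) + ((m:ℝ)+1)/((m:ℝ)*(2*(m:ℝ)+1)) * L 2)
            (by omega) (by omega)
            (hB_mono hmonoL (by omega))
            (hB_le_L2 hmonoL (by omega) (by omega))
            (by
              have h1 : (0:ℝ) ≤ (((2*m-a-1 : ℕ) : ℝ) + 1) / (((2*m-a-1 : ℕ) : ℝ) + 2) := by
                positivity
              have h2 : (0:ℝ) ≤ 1/(((2*m-a:ℕ):ℝ)+1) := by positivity
              have h3 : -(1:ℝ)/(((2*m-a:ℕ):ℝ)+1) = -(1/(((2*m-a:ℕ):ℝ)+1)) := by ring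
              linarith)
            (by
              rw [ecast]
              rw [show (((2*m-a-1 : ℕ) : ℝ) + 2) = ((2*m-a:ℕ):ℝ) + 1 by linarith [ecast]])
            hc2 hbase
          linarith [hcore]
      · rw [entB_off L (by omega) (by omega) hlt (by omega)]
        have ecast : ((2*m-a-1 : ℕ) : ℝ) + 1 = ((2*m-a : ℕ) : ℝ) := by
          have h1 : 2*m-a-1+1 = 2*m-a := by omega
          exact_mod_cast congrArg (Nat.cast (R := ℝ)) h1
        have hRpos : (0:ℝ) < ((2*m-a:ℕ):ℝ) + 1 := by positivity
        have hRR : (0:ℝ) ≤ ((2*m-a:ℕ):ℝ) := by positivity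
        have hcore := core (hB m L) (m-1) (2*m-a)
          (-1/(((2*m-a:ℕ):ℝ)+1))
          (L 2) (1/(2*(m:ℝ)+1) + ((m:ℝ)+1)/((m:ℝ)*(2*(m:ℝ)+1)) * L 2)
          (by omega) (by omega)
          (hB_mono hmonoL (by omega))
          (hB_le_L2 hmonoL (by omega) (by omega))
          (le_refl _)
          (by
            have h1 : (0:ℝ) ≤ ((2*m-a:ℕ):ℝ)/(((2*m-a:ℕ):ℝ)+1) := by positivity
            have h2 : (0:ℝ) ≤ 1/(((2*m-a:ℕ):ℝ)+1) := by positivity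
            have h3 : -(1:ℝ)/(((2*m-a:ℕ):ℝ)+1) = -(1/(((2*m-a:ℕ):ℝ)+1)) := by ring
            linarith)
          hc2 hbase
        have eterm : (-1/(((2*m-a:ℕ):ℝ)+1)) * hB m L (2*m-a-1)
            = - (hB m L (2*m-a-1) / (((2*m-a-1 : ℕ) : ℝ) + 2)) := by
          rw [show (((2*m-a-1 : ℕ) : ℝ) + 2) = ((2*m-a:ℕ):ℝ) + 1 by linarith [ecast]]
          ring
        linarith [hcore, eterm]

lemma ent_nonneg {m : ℕ} (L : ℕ → ℝ) (hm : 3 ≤ m)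
    (hub : L 2 ≤ 1)
    (hmonoL : ∀ i j, 2 ≤ i → i ≤ j → j ≤ 2*m+1 → L j ≤ L i)
    (hc1 : 0 ≤ 1/(2*(m:ℝ)+1) + (m:ℝ)/(((m:ℝ)+1)*(2*(m:ℝ)+1)) * L 2 + GG (hA m L) m)
    (hc2 : 0 ≤ 1/(2*(m:ℝ)+1) + ((m:ℝ)+1)/((m:ℝ)*(2*(m:ℝ)+1)) * L 2 + GG (hB m L) (m-1))
    {a b : ℕ} (ha : a < 2*m+1) (hb : b < 2*m+1) :
    0 ≤ ent m L a b := by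
  rcases le_total a b with h | h
  · exact ent_nonneg_le L hm hub hmonoL hc1 hc2 h hb
  · rw [ent_symm]
    exact ent_nonneg_le L hm hub hmonoL hc1 hc2 h ha



lemma aux_charpoly_conj {n : ℕ} (P D M : Matrix (Fin n) (Fin n) ℝ) (hP : P.det ≠ 0)
    (h : P * D = M * P) : D.charpoly = M.charpoly := by
  have key : (P.map C) * charmatrix D = charmatrix M * (P.map C) := by
    have hmap : (P * D).map C = (M * P).map C := by rw [h]
    rw [Matrix.map_mul, Matrix.map_mul] at hmap
    unfold charmatrix
    rw [Matrix.mul_sub, Matrix.sub_mul]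
    rw [(scalar_commute (X : ℝ[X]) (Commute.all _) (P.map C)).eq]
    simp only [RingHom.mapMatrix_apply]
    rw [hmap]
  have hdet := congrArg det key
  rw [det_mul, det_mul] at hdet
  have hPC : (P.map C).det = C P.det := by
    rw [← RingHom.mapMatrix_apply]
    exact (RingHom.map_det _ _).symm
  rw [hPC] at hdet
  have hC : (C P.det : ℝ[X]) ≠ 0 := by simpa using hP
  unfold Matrix.charpoly
  rw [mul_comm (C P.det)] at hdet
  exact mul_right_cancel₀ hC hdet

lemma aux_charpoly_diagonal {n : ℕ} (d : Fin n → ℝ) :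
    (diagonal d).charpoly = ∏ i, (X - C (d i)) := by
  have : charmatrix (diagonal d) = diagonal (fun i => X - C (d i)) := by
    ext i j
    by_cases hij : i = j
    · subst hij; simp
    · simp [charmatrix_apply_ne _ _ _ hij, diagonal_apply_ne _ hij,
        diagonal_apply_ne d hij]
  rw [Matrix.charpoly, this, det_diagonal]

lemma alf_eq (j : ℕ) : alf j = if j % 2 = 1 then 2*j+1 else 2*j := by
  unfold alf
  simp [Nat.odd_iff]

lemma bet_eq (j : ℕ) : bet j = if j % 2 = 1 then 2*j+3 else 2*j+2 := by
  unfold bet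
  simp [Nat.odd_iff]

def Efun (m t : ℕ) : ℕ :=
  if t = 0 then 1 else if t = 1 then 2 else if t ≤ m+1 then alf (t-1) else bet (t-m-1)

def Ffun (m i : ℕ) : ℕ :=
  if i = 1 then 0 else if i = 2 then 1 else if i % 4 = 3 then (i-1)/2 + 1
  else if i % 4 = 0 then i/2 + 1 else if i % 4 = 1 then (i-3)/2 + m + 1
  else (i-2)/2 + m + 1

lemma Efun_mem {k m t : ℕ} (hm : m = 2*k+1) (hk : 1 ≤ k) (ht : t < 2*m+1) :
    Efun m t ∈ Finset.Icc 1 (2*m+1) := by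
  simp only [Finset.mem_Icc]
  unfold Efun
  rw [alf_eq, bet_eq]
  split_ifs <;> omega

lemma Ffun_mem {k m i : ℕ} (hm : m = 2*k+1) (hk : 1 ≤ k) (hi : i ∈ Finset.Icc 1 (2*m+1)) :
    Ffun m i ∈ Finset.range (2*m+1) := by
  simp only [Finset.mem_Icc] at hi
  simp only [Finset.mem_range]
  unfold Ffun
  split_ifs <;> omega

lemma Ffun_Efun {k m t : ℕ} (hm : m = 2*k+1) (hk : 1 ≤ k) (ht : t < 2*m+1) :
    Ffun m (Efun m t) = t := by
  rcases Nat.eq_zero_or_pos t with h0 | h0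
  · subst h0; simp [Efun, Ffun]
  rcases Nat.lt_or_ge t 2 with h1 | h1
  · have : t = 1 := by omega
    subst this
    simp [Efun, Ffun]
  rcases Nat.lt_or_ge t (m+2) with h2 | h2
  · by_cases hpar : (t-1) % 2 = 1
    · have hE : Efun m t = 2*(t-1)+1 := by
        unfold Efun
        rw [if_neg (by omega), if_neg (by omega), if_pos (by omega), alf_eq, if_pos hpar]
      rw [hE]
      unfold Ffun
      split_ifs <;> omega
    · have hE : Efun m t = 2*(t-1) := by
        unfold Efun
        rw [if_neg (by omega), if_neg (by omega), if_pos (by omega), alf_eq, if_neg hpar]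
      rw [hE]
      unfold Ffun
      split_ifs <;> omega
  · by_cases hpar : (t-m-1) % 2 = 1
    · have hE : Efun m t = 2*(t-m-1)+3 := by
        unfold Efun
        rw [if_neg (by omega), if_neg (by omega), if_neg (by omega), bet_eq, if_pos hpar]
      rw [hE]
      unfold Ffun
      split_ifs <;> omega
    · have hE : Efun m t = 2*(t-m-1)+2 := by
        unfold Efun
        rw [if_neg (by omega), if_neg (by omega), if_neg (by omega), bet_eq, if_neg hpar]
      rw [hE]
      unfold Ffun
      split_ifs <;> omega

lemma Efun_Ffun {k m i : ℕ} (hm : m = 2*k+1) (hk : 1 ≤ k) (hi : i ∈ Finset.Icc 1 (2*m+1)) :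
    Efun m (Ffun m i) = i := by
  simp only [Finset.mem_Icc] at hi
  by_cases e1 : i = 1
  · subst e1; simp [Efun, Ffun]
  by_cases e2 : i = 2
  · subst e2; simp [Efun, Ffun]
  by_cases e3 : i % 4 = 3
  · have hF : Ffun m i = (i-1)/2 + 1 := by
      unfold Ffun
      rw [if_neg e1, if_neg e2, if_pos e3]
    rw [hF]
    unfold Efun
    rw [if_neg (by omega), if_neg (by omega), if_pos (by omega), alf_eq]
    rw [if_pos (by omega)]
    omega
  by_cases e4 : i % 4 = 0
  · have hF : Ffun m i = i/2 + 1 := by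
      unfold Ffun
      rw [if_neg e1, if_neg e2, if_neg e3, if_pos e4]
    rw [hF]
    unfold Efun
    rw [if_neg (by omega), if_neg (by omega), if_pos (by omega), alf_eq]
    rw [if_neg (by omega)]
    omega
  by_cases e5 : i % 4 = 1
  · have hF : Ffun m i = (i-3)/2 + m + 1 := by
      unfold Ffun
      rw [if_neg e1, if_neg e2, if_neg e3, if_neg e4, if_pos e5]
    rw [hF]
    unfold Efun
    rw [if_neg (by omega), if_neg (by omega), if_neg (by omega), bet_eq]
    rw [if_pos (by omega)]
    omega
  · have hF : Ffun m i = (i-2)/2 + m + 1 := by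
      unfold Ffun
      rw [if_neg e1, if_neg e2, if_neg e3, if_neg e4, if_neg e5]
    rw [hF]
    unfold Efun
    rw [if_neg (by omega), if_neg (by omega), if_neg (by omega), bet_eq]
    rw [if_neg (by omega)]
    omega

lemma eig_lam {m t : ℕ} (L : ℕ → ℝ) (hm : 1 ≤ m) (ht : t < 2*m+1) :
    eig m L t = (fun j => if j = 1 then (1:ℝ) else L j) (Efun m t) := by
  unfold eig Efun
  rcases Nat.eq_zero_or_pos t with h0 | h0
  · subst h0; simp
  rcases Nat.lt_or_ge t 2 with h1 | h1
  · have : t = 1 := by omega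
    subst this
    norm_num
  rcases Nat.lt_or_ge t (m+2) with h2 | h2
  · rw [if_neg (by omega), if_neg (by omega), if_pos (by omega),
      if_neg (by omega), if_neg (by omega), if_pos (by omega)]
    have := alf_ge (t-1) (by omega)
    show L (alf (t-1)) = if alf (t-1) = 1 then 1 else L (alf (t-1))
    rw [if_neg (by omega)]
  · rw [if_neg (by omega), if_neg (by omega), if_neg (by omega),
      if_neg (by omega), if_neg (by omega), if_neg (by omega)]
    have := bet_ge (t-m-1)
    show L (bet (t-m-1)) = if bet (t-m-1) = 1 then 1 else L (bet (t-m-1))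
    rw [if_neg (by omega)]

lemma prod_eig {k m : ℕ} (L : ℕ → ℝ) (hm : m = 2*k+1) (hk : 1 ≤ k) :
    ∏ t ∈ Finset.range (2*m+1), (X - C (eig m L t))
    = (X - C 1) * ∏ j ∈ Finset.Icc 2 (2*m+1), (X - C (L j)) := by
  have step1 : ∏ t ∈ Finset.range (2*m+1), (X - C (eig m L t))
      = ∏ j ∈ Finset.Icc 1 (2*m+1), (X - C (if j = 1 then (1:ℝ) else L j)) := by
    apply Finset.prod_nbij' (fun t => Efun m t) (fun i => Ffun m i)
    · intro t ht
      simp only [Finset.mem_range] at ht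
      exact Efun_mem hm hk ht
    · intro i hi
      exact Ffun_mem hm hk hi
    · intro t ht
      simp only [Finset.mem_range] at ht
      exact Ffun_Efun hm hk ht
    · intro i hi
      exact Efun_Ffun hm hk hi
    · intro t ht
      simp only [Finset.mem_range] at ht
      rw [eig_lam L (by omega) ht]
  rw [step1]
  have hsplit : Finset.Icc 1 (2*m+1) = insert 1 (Finset.Icc 2 (2*m+1)) := by
    ext x
    simp only [Finset.mem_Icc, Finset.mem_insert]
    omega
  rw [hsplit, Finset.prod_insert (by simp)]
  have h1 : (if (1:ℕ) = 1 then (1:ℝ) else L 1) = 1 := by norm_num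
  rw [h1]
  congr 1
  apply Finset.prod_congr rfl
  intro j hj
  simp only [Finset.mem_Icc] at hj
  rw [if_neg (by omega)]

lemma Lmono_of_dec {N : ℕ} (L : ℕ → ℝ) (hdec : ∀ j, 2 ≤ j → j < N → L (j+1) ≤ L j) :
    ∀ i j, 2 ≤ i → i ≤ j → j ≤ N → L j ≤ L i := by
  intro i j h2 hij hjN
  induction j with
  | zero => omega
  | succ j ih =>
    rcases Nat.eq_or_lt_of_le hij with h | h
    · rw [h]
    · have h1 : L (j+1) ≤ L j := hdec j (by omega) (by omega)
      have h2' : L j ≤ L i := ih (by omega) (by omega)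
      linarith

lemma sum_alf {m : ℕ} (L : ℕ → ℝ) (hm : 1 ≤ m) :
    ∑ j ∈ Finset.Icc 1 m, L (if Odd j then 2*j+1 else 2*j) / (((m-j+1)*(m-j+2) : ℕ) : ℝ)
    = GG (hA m L) m := by
  have half : ∀ j : ℕ, (if Odd j then 2*j+1 else 2*j) = alf j := fun j => rfl
  simp only [half]
  rw [← Finset.Ico_add_one_right_eq_Icc, show m+1 = 1+m by omega, reindex_Ico 1 m]
  unfold GG
  apply Finset.sum_congr rfl
  intro r hr
  simp only [Finset.mem_range] at hr
  have eidx : 1+m-1-r = m-r := by omega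
  rw [eidx]
  have e1 : m-(m-r)+1 = r+1 := by omega
  have e2 : m-(m-r)+2 = r+2 := by omega
  rw [e1, e2]
  congr 1
  unfold hA
  rw [eig_A L (by omega) (by omega)]
  congr 2
  omega

lemma sum_bet {m : ℕ} (L : ℕ → ℝ) (hm : 2 ≤ m) :
    ∑ j ∈ Finset.Icc 1 (m-1), L (if Odd j then 2*j+3 else 2*j+2) / (((m-j)*(m-j+1) : ℕ) : ℝ)
    = GG (hB m L) (m-1) := by
  have hbet : ∀ j : ℕ, (if Odd j then 2*j+3 else 2*j+2) = bet j := fun j => rfl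
  simp only [hbet]
  rw [← Finset.Ico_add_one_right_eq_Icc, show (m-1)+1 = 1+(m-1) by omega, reindex_Ico 1 (m-1)]
  unfold GG
  apply Finset.sum_congr rfl
  intro r hr
  simp only [Finset.mem_range] at hr
  have eidx : 1+(m-1)-1-r = m-1-r := by omega
  rw [eidx]
  have e1 : m-(m-1-r) = r+1 := by omega
  have e2 : m-(m-1-r)+1 = r+2 := by omega
  rw [e2, e1]
  congr 1
  unfold hB
  rw [eig_B L (by omega)]
  congr 2
  omega



def Pmat (m : ℕ) : Matrix (Fin (2*m+1)) (Fin (2*m+1)) ℝ :=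
  Matrix.of fun i j => row m i j

noncomputable def Dmat (m : ℕ) (L : ℕ → ℝ) : Matrix (Fin (2*m+1)) (Fin (2*m+1)) ℝ :=
  Matrix.of fun i j => ent m L i j

lemma PPt {m : ℕ} (hm : 1 ≤ m) :
    Pmat m * (Pmat m)ᵀ = diagonal (fun i : Fin (2*m+1) => cnorm m (i:ℕ)) := by
  ext i j
  rw [Matrix.mul_apply]
  simp only [Pmat, Matrix.transpose_apply, Matrix.of_apply]
  rw [Fin.sum_univ_eq_sum_range (fun b => row m (i:ℕ) b * row m (j:ℕ) b) (2*m+1)]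
  rw [row_dot (i:ℕ) (j:ℕ) i.isLt j.isLt]
  simp [Matrix.diagonal_apply, Fin.val_eq_val]

lemma detP {m : ℕ} (hm : 1 ≤ m) : (Pmat m).det ≠ 0 := by
  have h := congrArg Matrix.det (PPt hm)
  rw [Matrix.det_mul, Matrix.det_transpose, Matrix.det_diagonal] at h
  intro h0
  rw [h0, zero_mul] at h
  have : ∏ i : Fin (2*m+1), cnorm m (i:ℕ) ≠ 0 :=
    Finset.prod_ne_zero_iff.mpr fun i _ => ne_of_gt (cnorm_pos hm i.isLt)
  exact this h.symm

lemma PD {m : ℕ} (L : ℕ → ℝ) (hm : 1 ≤ m) :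
    Pmat m * Dmat m L = diagonal (fun i : Fin (2*m+1) => eig m L (i:ℕ)) * Pmat m := by
  ext i j
  rw [Matrix.mul_apply, Matrix.diagonal_mul]
  simp only [Pmat, Dmat, Matrix.of_apply]
  rw [Fin.sum_univ_eq_sum_range (fun b => row m (i:ℕ) b * ent m L b (j:ℕ)) (2*m+1)]
  exact dot_ent L hm i.isLt j.isLt

end SDIEPaux


/-- Case `n = 4k+3`, `m = 2k+1`: with `α_j = 2j+1` for `j` odd and `2j` for `j` even
(the increasing enumeration `3, 4, 7, 8, …, n-4, n-3, n`), and `β_j = 2j+3` for `j` odd and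
`2j+2` for `j` even (the increasing enumeration `5, 6, 9, 10, …, n-2, n-1`), if both
`1/n + ((n-m-1)/(n(m+1)))λ₂ + ∑_{j=1}^{m} λ_{α_j}/((m-j+1)(m-j+2)) ≥ 0` and
`1/n + ((n-m)/(nm))λ₂ + ∑_{j=1}^{m-1} λ_{β_j}/((m-j)(m-j+1)) ≥ 0`, then `1, λ₂, …, λₙ`
is the spectrum of an `n × n` symmetric doubly stochastic matrix. -/
theorem sdiep_4k3 (k n m : ℕ) (hk : 1 ≤ k) (hn : n = 4 * k + 3) (hm : m = 2 * k + 1)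
    (L : ℕ → ℝ) (hub : L 2 ≤ 1)
    (hdec : ∀ j, 2 ≤ j → j < n → L (j + 1) ≤ L j)
    (hlb : -1 ≤ L n)
    (htr : 0 ≤ 1 + ∑ j ∈ Finset.Icc 2 n, L j)
    (hcond1 : 0 ≤ 1 / (n : ℝ) + ((n : ℝ) - (m : ℝ) - 1) / ((n : ℝ) * ((m : ℝ) + 1)) * L 2 +
        ∑ j ∈ Finset.Icc 1 m, L (if Odd j then 2 * j + 1 else 2 * j) /
          (((m - j + 1) * (m - j + 2) : ℕ) : ℝ))
    (hcond2 : 0 ≤ 1 / (n : ℝ) + ((n : ℝ) - (m : ℝ)) / ((n : ℝ) * (m : ℝ)) * L 2 +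
        ∑ j ∈ Finset.Icc 1 (m - 1), L (if Odd j then 2 * j + 3 else 2 * j + 2) /
          (((m - j) * (m - j + 1) : ℕ) : ℝ)) :
    ∃ D : Matrix (Fin n) (Fin n) ℝ, D.IsSymm ∧ DoublyStochastic D ∧
      D.charpoly = (X - C 1) * ∏ j ∈ Finset.Icc 2 n, (X - C (L j)) := by
  have hm3 : 3 ≤ m := by omega
  have hnm : n = 2*m+1 := by omega
  subst hnm
  have hmR : (0:ℝ) < (m:ℝ) := by
    have : (0:ℕ) < m := by omega
    exact_mod_cast this
  have hm1 : (0:ℝ) < (m:ℝ)+1 := by positivity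
  have hnR : (0:ℝ) < 2*(m:ℝ)+1 := by positivity
  have hmonoL := SDIEPaux.Lmono_of_dec L hdec
  have e1 : ((2*m+1:ℕ):ℝ) = 2*(m:ℝ)+1 := by push_cast; ring
  have hc1 : 0 ≤ 1/(2*(m:ℝ)+1) + (m:ℝ)/(((m:ℝ)+1)*(2*(m:ℝ)+1)) * L 2
      + SDIEPaux.GG (SDIEPaux.hA m L) m := by
    rw [SDIEPaux.sum_alf L (by omega), e1] at hcond1
    have e2 : (2*(m:ℝ)+1 - (m:ℝ) - 1)/((2*(m:ℝ)+1)*((m:ℝ)+1))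
        = (m:ℝ)/(((m:ℝ)+1)*(2*(m:ℝ)+1)) := by
      field_simp
      ring
    rw [e2] at hcond1
    exact hcond1
  have hc2 : 0 ≤ 1/(2*(m:ℝ)+1) + ((m:ℝ)+1)/((m:ℝ)*(2*(m:ℝ)+1)) * L 2
      + SDIEPaux.GG (SDIEPaux.hB m L) (m-1) := by
    rw [SDIEPaux.sum_bet L (by omega), e1] at hcond2
    have e2 : (2*(m:ℝ)+1 - (m:ℝ))/((2*(m:ℝ)+1)*(m:ℝ))
        = ((m:ℝ)+1)/((m:ℝ)*(2*(m:ℝ)+1)) := by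
      field_simp
      ring
    rw [e2] at hcond2
    exact hcond2
  refine ⟨SDIEPaux.Dmat m L, ?_, ⟨?_, ?_, ?_⟩, ?_⟩
  · -- symmetric
    ext i j
    simp only [SDIEPaux.Dmat, Matrix.transpose_apply, Matrix.of_apply]
    exact SDIEPaux.ent_symm m L j i
  · -- nonneg entries
    intro i j
    exact SDIEPaux.ent_nonneg L hm3 hub hmonoL hc1 hc2 i.isLt j.isLt
  · -- row sums
    intro i
    simp only [SDIEPaux.Dmat, Matrix.of_apply]
    rw [Fin.sum_univ_eq_sum_range (fun b => SDIEPaux.ent m L (i:ℕ) b) (2*m+1)]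
    exact SDIEPaux.ent_row_sum L (by omega) i.isLt
  · -- column sums
    intro j
    simp only [SDIEPaux.Dmat, Matrix.of_apply]
    have : ∀ i : Fin (2*m+1), SDIEPaux.ent m L (i:ℕ) (j:ℕ) = SDIEPaux.ent m L (j:ℕ) (i:ℕ) :=
      fun i => SDIEPaux.ent_symm m L i j
    rw [Finset.sum_congr rfl (fun i _ => this i)]
    rw [Fin.sum_univ_eq_sum_range (fun b => SDIEPaux.ent m L (j:ℕ) b) (2*m+1)]
    exact SDIEPaux.ent_row_sum L (by omega) j.isLt
  · -- characteristic polynomial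
    have hcp := SDIEPaux.aux_charpoly_conj (SDIEPaux.Pmat m) (SDIEPaux.Dmat m L)
      (Matrix.diagonal fun i : Fin (2*m+1) => SDIEPaux.eig m L (i:ℕ))
      (SDIEPaux.detP (by omega)) (SDIEPaux.PD L (by omega))
    rw [hcp, SDIEPaux.aux_charpoly_diagonal]
    rw [Fin.prod_univ_eq_prod_range (fun t => X - C (SDIEPaux.eig m L t)) (2*m+1)]
    exact SDIEPaux.prod_eig L hm hk
end
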